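/- arXiv:1303.7437 — 6 statements merged into one kernel-verified Lean document; each statement's English description precedes it below -/
import Mathlib

section
/- For every a > 0, all natural numbers k and m, and every real t ≥ 0, the convolution of two Laguerre functions satisfies ∫₀ᵗ φ_k(x) φ_m(t − x) dx = (2a)^{−1/2} ( φ_{k+m}(t) − φ_{k+m+1}(t) ). -/
open MeasureTheory Real intervalIntegral

lemma beta_nat : ∀ (j i : ℕ) (s : ℝ),
    ∫ x in (0:ℝ)..s, x ^ i * (s - x) ^ j
      = (i.factorial * j.factorial : ℝ) / (i + j + 1).factorial * s ^ (i + j + 1) := by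
  intro j
  induction j with
  | zero =>
    intro i s
    have hne : ((i:ℝ) + 1) ≠ 0 := by positivity
    simp only [pow_zero, mul_one, integral_pow, Nat.add_zero, Nat.factorial_one, mul_one,
      Nat.factorial_succ]
    push_cast
    field_simp
    ring
  | succ j ih =>
    intro i s
    have hu : ∀ x ∈ Set.uIcc (0:ℝ) s,
        HasDerivAt (fun y => (s - y) ^ (j + 1))
          ((↑(j + 1) * (s - x) ^ j) * (-1)) x := by
      intro x _
      exact (((hasDerivAt_id x).const_sub s).pow (j + 1))
    have hv : ∀ x ∈ Set.uIcc (0:ℝ) s,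
        HasDerivAt (fun y => y ^ (i + 1) / ((i:ℝ) + 1))
          ((↑(i + 1) * x ^ (i+1-1)) / ((i:ℝ) + 1)) x := by
      intro x _
      exact_mod_cast (hasDerivAt_pow (i + 1) x).div_const ((i:ℝ)+1)
    have hu' : IntervalIntegrable (fun x => (↑(j + 1) * (s - x) ^ j) * (-1 : ℝ))
        volume 0 s := (by fun_prop : Continuous fun x : ℝ => (↑(j + 1) * (s - x) ^ j) * (-1 : ℝ)).intervalIntegrable _ _
    have hv' : IntervalIntegrable (fun x => (↑(i + 1) * x ^ (i+1-1)) / ((i:ℝ) + 1))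
        volume 0 s := (by fun_prop : Continuous fun x : ℝ => (↑(i + 1) * x ^ (i+1-1)) / ((i:ℝ) + 1)).intervalIntegrable _ _
    have H := intervalIntegral.integral_mul_deriv_eq_deriv_mul hu hv hu' hv'
    have hipos : ((i:ℝ) + 1) ≠ 0 := by positivity
    have hL : ∫ x in (0:ℝ)..s, x ^ i * (s - x) ^ (j+1)
        = ∫ x in (0:ℝ)..s, (s - x) ^ (j + 1) * ((↑(i + 1) * x ^ (i+1-1)) / ((i:ℝ) + 1)) := by
      apply integral_congr
      intro x _
      push_cast
      field_simp
    have hR : ∫ x in (0:ℝ)..s, ((↑(j + 1) * (s - x) ^ j) * (-1 : ℝ)) * (x ^ (i+1) / ((i:ℝ) + 1))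
        = (-(↑(j+1) / (↑(i+1) : ℝ))) * ∫ x in (0:ℝ)..s, x ^ (i+1) * (s - x) ^ j := by
      rw [← intervalIntegral.integral_const_mul]
      apply integral_congr
      intro x _
      push_cast
      field_simp
    rw [hL, H, hR, ih (i+1) s]
    have e1 : i + 1 + j + 1 = i + (j + 1) + 1 := by ring
    rw [e1]
    have hfne : ((i + (j+1) + 1).factorial : ℝ) ≠ 0 := by
      exact_mod_cast (i + (j+1) + 1).factorial_ne_zero
    simp only [sub_self, zero_pow (Nat.succ_ne_zero j), zero_mul, zero_pow, Nat.factorial_succ]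
    push_cast
    field_simp
    ring

/-- The Laguerre polynomial `L_ℓ(t) = ∑_{j=0}^ℓ (-1)^j (ℓ choose j) t^j / j!`. -/
noncomputable def laguerrePoly (ℓ : ℕ) (t : ℝ) : ℝ :=
  ∑ j ∈ Finset.range (ℓ + 1), (-1 : ℝ) ^ j * (ℓ.choose j) * t ^ j / (j.factorial)

lemma lag_poly_conv (k m : ℕ) (s : ℝ) :
    ∫ u in (0:ℝ)..s, laguerrePoly k u * laguerrePoly m (s - u)
      = laguerrePoly (k+m) s - laguerrePoly (k+m+1) s := by
  set F : ℕ × ℕ → ℝ := fun p =>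
    (-1:ℝ)^(p.1+p.2) * (k.choose p.1) * (m.choose p.2) * s^(p.1+p.2+1)
      / ((p.1+p.2+1).factorial) with hF
  -- Step 1 : the integral equals the sum of F over the product of ranges
  have step1 : (∫ u in (0:ℝ)..s, laguerrePoly k u * laguerrePoly m (s - u))
      = ∑ i ∈ Finset.range (k+1), ∑ j ∈ Finset.range (m+1), F (i, j) := by
    have hint : (∫ u in (0:ℝ)..s, laguerrePoly k u * laguerrePoly m (s - u))
        = ∑ i ∈ Finset.range (k+1), ∑ j ∈ Finset.range (m+1),
            ∫ u in (0:ℝ)..s, ((-1:ℝ)^i * (k.choose i) * u^i / i.factorial) *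
              ((-1:ℝ)^j * (m.choose j) * (s-u)^j / j.factorial) := by
      rw [integral_congr (g := fun u => ∑ i ∈ Finset.range (k+1), ∑ j ∈ Finset.range (m+1),
          ((-1:ℝ)^i * (k.choose i) * u^i / i.factorial) *
            ((-1:ℝ)^j * (m.choose j) * (s-u)^j / j.factorial))
          (fun u _ => by rw [laguerrePoly, laguerrePoly, Finset.sum_mul_sum])]
      rw [intervalIntegral.integral_finset_sum]
      · refine Finset.sum_congr rfl fun i _ => ?_
        rw [intervalIntegral.integral_finset_sum]
        intro j _
        exact (by fun_prop : Continuous fun u : ℝ => ((-1:ℝ)^i * (k.choose i) * u^i / i.factorial) *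
          ((-1:ℝ)^j * (m.choose j) * (s-u)^j / j.factorial)).intervalIntegrable _ _
      · intro i _
        apply Continuous.intervalIntegrable
        fun_prop
    rw [hint]
    refine Finset.sum_congr rfl fun i _ => Finset.sum_congr rfl fun j _ => ?_
    have hc : ∫ u in (0:ℝ)..s, ((-1:ℝ)^i * (k.choose i) * u^i / i.factorial) *
        ((-1:ℝ)^j * (m.choose j) * (s-u)^j / j.factorial)
        = ((-1:ℝ)^i * (k.choose i) / i.factorial) * ((-1:ℝ)^j * (m.choose j) / j.factorial) *
            ∫ u in (0:ℝ)..s, u^i * (s-u)^j := by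
      rw [← intervalIntegral.integral_const_mul]
      exact integral_congr fun u _ => by ring
    rw [hc, beta_nat j i s, hF]
    have h1 : ((i.factorial : ℝ)) ≠ 0 := by exact_mod_cast i.factorial_ne_zero
    have h2 : ((j.factorial : ℝ)) ≠ 0 := by exact_mod_cast j.factorial_ne_zero
    have h3 : (((i+j+1).factorial : ℝ)) ≠ 0 := by exact_mod_cast (i+j+1).factorial_ne_zero
    simp only []
    field_simp
    ring
  -- Step 2 : the RHS equals the sum over range of antidiagonal sums of F
  have step2 : laguerrePoly (k+m) s - laguerrePoly (k+m+1) s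
      = ∑ n ∈ Finset.range (k+m+1), ∑ p ∈ Finset.HasAntidiagonal.antidiagonal n, F p := by
    have h1 : laguerrePoly (k+m) s
        = ∑ j ∈ Finset.range (k+m+2), (-1:ℝ)^j * ((k+m).choose j) * s^j / j.factorial := by
      rw [show k+m+2 = (k+m+1)+1 from rfl, Finset.sum_range_succ, Nat.choose_succ_self,
        laguerrePoly]
      simp
    have h2 : laguerrePoly (k+m) s - laguerrePoly (k+m+1) s
        = ∑ j ∈ Finset.range (k+m+2),
            ((-1:ℝ)^j * ((k+m).choose j) * s^j / j.factorial
              - (-1:ℝ)^j * ((k+m+1).choose j) * s^j / j.factorial) := by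
      rw [h1, laguerrePoly, Finset.sum_sub_distrib]
    rw [h2, Finset.sum_range_succ']
    have h0 : ((-1:ℝ)^0 * ((k+m).choose 0) * s^0 / (0:ℕ).factorial
        - (-1:ℝ)^0 * ((k+m+1).choose 0) * s^0 / (0:ℕ).factorial) = 0 := by simp
    rw [h0, add_zero]
    refine Finset.sum_congr rfl fun n _ => ?_
    have van : (((k+m).choose n : ℝ)) = ∑ p ∈ Finset.HasAntidiagonal.antidiagonal n,
        ((k.choose p.1 : ℝ) * (m.choose p.2 : ℝ)) := by
      rw [Nat.add_choose_eq]
      push_cast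
      ring
    have hch : ((k+m+1).choose (n+1) : ℝ) = ((k+m).choose n : ℝ) + ((k+m).choose (n+1) : ℝ) := by
      exact_mod_cast congrArg (Nat.cast (R := ℝ)) (Nat.choose_succ_succ (k+m) n)
    have hfne : (((n+1).factorial : ℝ)) ≠ 0 := by exact_mod_cast (n+1).factorial_ne_zero
    have lhs_eq : ((-1:ℝ)^(n+1) * ((k+m).choose (n+1)) * s^(n+1) / (n+1).factorial
        - (-1:ℝ)^(n+1) * ((k+m+1).choose (n+1)) * s^(n+1) / (n+1).factorial)
        = (-1:ℝ)^n * ((k+m).choose n) * s^(n+1) / (n+1).factorial := by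
      rw [hch]
      field_simp
      ring
    rw [lhs_eq, van, Finset.mul_sum, Finset.sum_mul, Finset.sum_div]
    refine Finset.sum_congr rfl fun p hp => ?_
    have hpn : p.1 + p.2 = n := Finset.HasAntidiagonal.mem_antidiagonal.mp hp
    simp only [hF, hpn]
    ring
  -- Step 3 : both index sets give the same sum
  have hdisj : (↑(Finset.range (k+m+1)) : Set ℕ).PairwiseDisjoint Finset.HasAntidiagonal.antidiagonal := by
    intro x _ y _ hxy
    simp only [Function.onFun]
    rw [Finset.disjoint_left]
    intro p hp hq
    exact hxy ((Finset.HasAntidiagonal.mem_antidiagonal.mp hp).symm.trans (Finset.HasAntidiagonal.mem_antidiagonal.mp hq))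
  have step3 : ∑ n ∈ Finset.range (k+m+1), ∑ p ∈ Finset.HasAntidiagonal.antidiagonal n, F p
      = ∑ p ∈ (Finset.range (k+m+1)).biUnion Finset.HasAntidiagonal.antidiagonal, F p :=
    (Finset.sum_biUnion hdisj).symm
  have step4 : ∑ i ∈ Finset.range (k+1), ∑ j ∈ Finset.range (m+1), F (i, j)
      = ∑ p ∈ (Finset.range (k+m+1)).biUnion Finset.HasAntidiagonal.antidiagonal, F p := by
    rw [← Finset.sum_product']
    apply Finset.sum_subset
    · intro p hp
      rw [Finset.mem_product, Finset.mem_range, Finset.mem_range] at hp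
      rw [Finset.mem_biUnion]
      exact ⟨p.1 + p.2, Finset.mem_range.mpr (by omega), Finset.HasAntidiagonal.mem_antidiagonal.mpr rfl⟩
    · intro p _ hp
      rw [Finset.mem_product, Finset.mem_range, Finset.mem_range] at hp
      push_neg at hp
      rcases lt_or_ge p.1 (k+1) with h | h
      · have h2 : m < p.2 := by
          have := hp h
          omega
        simp [hF, Nat.choose_eq_zero_of_lt h2]
      · have h1 : k < p.1 := by omega
        simp [hF, Nat.choose_eq_zero_of_lt h1]
  rw [step1, step2, step3, step4]

/-- The Laguerre function with parameter `a`: `φ_ℓ(t) = √(2a) e^{-a t} L_ℓ(2 a t)`. -/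
noncomputable def laguerreFun (a : ℝ) (ℓ : ℕ) (t : ℝ) : ℝ :=
  Real.sqrt (2 * a) * Real.exp (-(a * t)) * laguerrePoly ℓ (2 * a * t)

/-- The convolution of two Laguerre functions:
`∫₀ᵗ φ_k(x) φ_m(t-x) dx = (2a)^{-1/2} (φ_{k+m}(t) - φ_{k+m+1}(t))`. -/
theorem laguerre_convolution (a : ℝ) (ha : 0 < a) (k m : ℕ) (t : ℝ) (ht : 0 ≤ t) :
    ∫ x in (0:ℝ)..t, laguerreFun a k x * laguerreFun a m (t - x)
      = (2 * a) ^ (-(1/2 : ℝ)) *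
        (laguerreFun a (k + m) t - laguerreFun a (k + m + 1) t) := by
  have h2a : (0:ℝ) < 2 * a := by linarith
  have h2a' : (2*a : ℝ) ≠ 0 := ne_of_gt h2a
  have hpt : ∀ x ∈ Set.uIcc (0:ℝ) t, laguerreFun a k x * laguerreFun a m (t - x)
      = (2*a) * Real.exp (-(a*t)) *
        (fun u => laguerrePoly k u * laguerrePoly m (2*a*t - u)) (2*a*x) := by
    intro x _
    simp only [laguerreFun]
    have hs : Real.sqrt (2*a) * Real.sqrt (2*a) = 2*a := Real.mul_self_sqrt h2a.le
    have he : Real.exp (-(a*x)) * Real.exp (-(a*(t-x))) = Real.exp (-(a*t)) := by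
      rw [← Real.exp_add]; ring_nf
    have harg : 2*a*(t-x) = 2*a*t - 2*a*x := by ring
    calc (Real.sqrt (2*a) * Real.exp (-(a*x)) * laguerrePoly k (2*a*x)) *
          (Real.sqrt (2*a) * Real.exp (-(a*(t-x))) * laguerrePoly m (2*a*(t-x)))
        = (Real.sqrt (2*a) * Real.sqrt (2*a)) * (Real.exp (-(a*x)) * Real.exp (-(a*(t-x)))) *
            (laguerrePoly k (2*a*x) * laguerrePoly m (2*a*(t-x))) := by ring
      _ = (2*a) * Real.exp (-(a*t)) *
            (laguerrePoly k (2*a*x) * laguerrePoly m (2*a*t - 2*a*x)) := by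
          rw [hs, he, harg]
  have hsub := intervalIntegral.integral_comp_mul_left (a := (0:ℝ)) (b := t)
    (fun u => laguerrePoly k u * laguerrePoly m (2*a*t - u)) h2a'
  rw [integral_congr hpt, intervalIntegral.integral_const_mul, hsub]
  simp only [mul_zero, smul_eq_mul]
  rw [lag_poly_conv]
  have hsq : (2*a) ^ (-(1/2:ℝ)) * Real.sqrt (2*a) = 1 := by
    rw [Real.sqrt_eq_rpow, ← Real.rpow_add h2a]
    norm_num
  simp only [laguerreFun]
  have : (2 * a) ^ (-(1/2:ℝ)) *
      (Real.sqrt (2*a) * Real.exp (-(a*t)) * laguerrePoly (k+m) (2*a*t)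
        - Real.sqrt (2*a) * Real.exp (-(a*t)) * laguerrePoly (k+m+1) (2*a*t))
      = ((2 * a) ^ (-(1/2:ℝ)) * Real.sqrt (2*a)) * Real.exp (-(a*t)) *
          (laguerrePoly (k+m) (2*a*t) - laguerrePoly (k+m+1) (2*a*t)) := by ring
  rw [this, hsq]
  field_simp
end

section
/- Let ν > 1/2. There exist constants Q̃₁, Q̃₂ > 0 such that for all ℓ ∈ ℕ: Σ_{k=0}^{ℓ} binom(−ν, k)² ≤ Q̃₁ (max(ℓ,1))^{2ν−1} and Σ_{k=0}^{ℓ} Σ_{n=0}^{k} binom(−ν, n)² ≥ Q̃₂ (max(ℓ,1))^{2ν}. -/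
open Real

noncomputable def genBinom (x : ℝ) (k : ℕ) : ℝ :=
  (∏ j ∈ Finset.range k, (x - j)) / (k.factorial)

namespace GenBinomAux

noncomputable def A (s : ℝ) (k : ℕ) : ℝ := ∏ j ∈ Finset.range k, ((s + j + 1) / (j + 1))

lemma A_pos {s : ℝ} (hs : -1 < s) (k : ℕ) : 0 < A s k := by
  refine Finset.prod_pos fun j _ => div_pos ?_ (by positivity)
  have : (0:ℝ) ≤ (j:ℝ) := Nat.cast_nonneg j
  linarith

lemma genBinom_sq (ν : ℝ) (k : ℕ) : (genBinom (-ν) k)^2 = (A (ν - 1) k)^2 := by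
  have h1 : genBinom (-ν) k = (-1)^k * A (ν-1) k := by
    unfold genBinom A
    rw [Finset.prod_div_distrib]
    have hfac : ∏ j ∈ Finset.range k, ((j:ℝ) + 1) = (k.factorial : ℝ) := by
      rw [show (k.factorial : ℝ) = ((∏ j ∈ Finset.range k, (j+1) : ℕ) : ℝ) by
        rw [Finset.prod_range_add_one_eq_factorial]]
      push_cast; rfl
    have hnum : ∏ j ∈ Finset.range k, (-ν - (j:ℝ)) =
        (-1)^k * ∏ j ∈ Finset.range k, (ν - 1 + (j:ℝ) + 1) := by
      rw [Finset.prod_congr rfl (fun j (_ : j ∈ Finset.range k) =>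
        (show (-ν - (j:ℝ)) = (-1) * (ν - 1 + (j:ℝ) + 1) by ring)),
        Finset.prod_mul_distrib, Finset.prod_const, Finset.card_range]
    rw [hnum, hfac, mul_div_assoc]
  rw [h1, mul_pow, ← pow_mul, mul_comm k 2, pow_mul]
  norm_num

lemma A_succ (s : ℝ) (k : ℕ) : A s (k+1) = A s k * ((s + k + 1)/(k+1)) :=
  Finset.prod_range_succ _ k

lemma A_shift {s : ℝ} (hs : s + 1 ≠ 0) : ∀ k : ℕ, A (s+1) k = A s k * (((k:ℝ) + s + 1)/(s+1))
  | 0 => by simp [A, div_self hs]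
  | (k+1) => by
    rw [A_succ, A_succ, A_shift hs k]
    push_cast
    ring

lemma prod_ratio : ∀ k : ℕ, ∏ j ∈ Finset.range k, (((j:ℝ)+2)/((j:ℝ)+1)) = (k:ℝ)+1
  | 0 => by simp
  | (k+1) => by
    rw [Finset.prod_range_succ, prod_ratio k]
    have hk : ((k:ℝ)+1) ≠ 0 := by positivity
    push_cast
    field_simp
    ring



lemma bern_neg {s x : ℝ} (hs1 : -1 < s) (hs0 : s ≤ 0) (hx0 : 0 ≤ x) (hx1 : x ≤ 1) :
    1 + s * x ≤ (1 + x) ^ s := by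
  have hb : (1 + x) ^ (-s) ≤ 1 + (-s) * x :=
    rpow_one_add_le_one_add_mul_self (by linarith) (by linarith) (by linarith)
  have hpos : 0 < (1+x) ^ (-s) := rpow_pos_of_pos (by linarith) _
  have h2 : (1+x)^s * (1+x)^(-s) = 1 := by
    rw [← Real.rpow_add (by linarith)]; simp
  have hC : 0 < 1 + s * x := by nlinarith
  have key : (1+x)^(-s) * (1 + s*x) ≤ 1 := by
    nlinarith [mul_le_mul_of_nonneg_right hb hC.le, sq_nonneg (s*x)]
  nlinarith [rpow_pos_of_pos (show (0:ℝ) < 1 + x by linarith) s]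

-- per-factor lower bound : ((i+2)/(i+1))^s ≤ (s + i + 2)/(i + 2)  for s ∈ (-1,0]
lemma factor_lower {s : ℝ} (hs1 : -1 < s) (hs0 : s ≤ 0) (i : ℕ) :
    (((i:ℝ)+2)/((i:ℝ)+1))^s ≤ (s + (i:ℝ) + 2)/((i:ℝ)+2) := by
  have h1 : (0:ℝ) < (i:ℝ)+1 := by positivity
  have h2 : (0:ℝ) < (i:ℝ)+2 := by positivity
  have hy0 : (0:ℝ) ≤ ((i:ℝ)+1)/((i:ℝ)+2) := by positivity
  have e2 : (((i:ℝ)+2)/((i:ℝ)+1))^s = (((i:ℝ)+1)/((i:ℝ)+2))^(-s) := by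
    rw [Real.rpow_neg hy0, ← Real.inv_rpow hy0, inv_div]
  have e1 : ((i:ℝ)+1)/((i:ℝ)+2) = 1 + (-(1/((i:ℝ)+2))) := by
    field_simp
    ring
  have hb : (1 + (-(1/((i:ℝ)+2))))^(-s) ≤ 1 + (-s) * (-(1/((i:ℝ)+2))) := by
    apply rpow_one_add_le_one_add_mul_self
    · have : 1/((i:ℝ)+2) ≤ 1 := by
        rw [div_le_one h2]; linarith
      linarith
    · linarith
    · linarith
  rw [e2, e1]
  refine hb.trans (le_of_eq ?_)
  field_simp
  ring

lemma factor_upper {s : ℝ} (hs1 : -1 < s) (hs0 : s ≤ 0) (j : ℕ) :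
    (s + (j:ℝ) + 1)/((j:ℝ)+1) ≤ (((j:ℝ)+2)/((j:ℝ)+1))^s := by
  have h1 : (0:ℝ) < (j:ℝ)+1 := by positivity
  have hx0 : (0:ℝ) ≤ 1/((j:ℝ)+1) := by positivity
  have hx1 : 1/((j:ℝ)+1) ≤ 1 := by rw [div_le_one h1]; linarith
  have hb := bern_neg hs1 hs0 hx0 hx1
  have e1 : (1:ℝ) + 1/((j:ℝ)+1) = ((j:ℝ)+2)/((j:ℝ)+1) := by field_simp; ring
  have e2 : (1:ℝ) + s * (1/((j:ℝ)+1)) = (s + (j:ℝ) + 1)/((j:ℝ)+1) := by field_simp; ring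
  rw [e1, e2] at hb
  exact hb



lemma A_base_upper {s : ℝ} (hs1 : -1 < s) (hs0 : s ≤ 0) (k : ℕ) : A s k ≤ ((k:ℝ)+1) ^ s := by
  have h : A s k ≤ ∏ j ∈ Finset.range k, (((j:ℝ)+2)/((j:ℝ)+1)) ^ s := by
    apply Finset.prod_le_prod
    · intro j _
      have : (0:ℝ) ≤ (j:ℝ) := Nat.cast_nonneg j
      have h1 : (0:ℝ) < s + (j:ℝ) + 1 := by linarith
      positivity
    · intro j _
      exact factor_upper hs1 hs0 j
  rwa [Real.finset_prod_rpow _ _ (fun j _ => by positivity) s, prod_ratio] at h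

lemma A_base_lower {s : ℝ} (hs1 : -1 < s) (hs0 : s ≤ 0) (k : ℕ) (hk : 1 ≤ k) :
    (1+s) * (k:ℝ)^s ≤ A s k := by
  obtain ⟨m, rfl⟩ : ∃ m, k = m + 1 := ⟨k-1, (Nat.succ_pred_eq_of_pos hk).symm⟩
  rw [A, Finset.prod_range_succ']
  have hprod : ((m:ℝ)+1)^s ≤ ∏ i ∈ Finset.range m, (s + (↑(i+1):ℝ) + 1) / ((↑(i+1):ℝ) + 1) := by
    have h : ∏ i ∈ Finset.range m, (((i:ℝ)+2)/((i:ℝ)+1)) ^ s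
        ≤ ∏ i ∈ Finset.range m, (s + (↑(i+1):ℝ) + 1) / ((↑(i+1):ℝ) + 1) := by
      apply Finset.prod_le_prod
      · intro i _; positivity
      · intro i _
        have := factor_lower hs1 hs0 i
        push_cast
        convert this using 2
        · rfl
        all_goals ring
    rwa [Real.finset_prod_rpow _ _ (fun j _ => by positivity) s, prod_ratio] at h
  have h0 : (s + (↑(0:ℕ):ℝ) + 1) / ((↑(0:ℕ):ℝ) + 1) = 1 + s := by norm_num; ring
  rw [h0]
  have hk1 : ((↑(m+1):ℕ):ℝ) = (m:ℝ)+1 := by push_cast; ring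
  rw [hk1]
  have hs1' : (0:ℝ) < 1 + s := by linarith
  calc (1+s) * ((m:ℝ)+1)^s ≤ (1+s) * ∏ i ∈ Finset.range m, (s + (↑(i+1):ℝ) + 1) / ((↑(i+1):ℝ) + 1) := by
        exact mul_le_mul_of_nonneg_left hprod hs1'.le
    _ = (∏ i ∈ Finset.range m, (s + (↑(i+1):ℝ) + 1) / ((↑(i+1):ℝ) + 1)) * (1+s) := by ring


lemma A_bounds : ∀ n : ℕ, ∀ s : ℝ, -1 < s → s ≤ n →
    ∃ c₁ c₂ : ℝ, 0 < c₁ ∧ 0 < c₂ ∧ ∀ k : ℕ, 1 ≤ k →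
      c₁ * (k:ℝ)^s ≤ A s k ∧ A s k ≤ c₂ * (k:ℝ)^s := by
  intro n
  induction n with
  | zero =>
    intro s hs1 hs0
    rw [Nat.cast_zero] at hs0
    refine ⟨1+s, 1, by linarith, one_pos, fun k hk => ⟨A_base_lower hs1 hs0 k hk, ?_⟩⟩
    have hk0 : (0:ℝ) < (k:ℝ) := by exact_mod_cast hk
    calc A s k ≤ ((k:ℝ)+1)^s := A_base_upper hs1 hs0 k
      _ ≤ (k:ℝ)^s := Real.rpow_le_rpow_of_nonpos hk0 (by linarith) hs0
      _ = 1 * (k:ℝ)^s := (one_mul _).symm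
  | succ n ih =>
    intro s hs1 hsn
    by_cases hs : s ≤ n
    · exact ih s hs1 hs
    · push_neg at hs
      have hn0 : (0:ℝ) ≤ (n:ℝ) := Nat.cast_nonneg n
      have hs0 : 0 < s := lt_of_le_of_lt hn0 hs
      obtain ⟨c₁, c₂, hc₁, hc₂, hb⟩ := ih (s-1) (by linarith)
        (by push_cast at hsn ⊢; linarith)
      refine ⟨c₁/s, c₂*(1+s)/s, by positivity, by positivity, fun k hk => ?_⟩
      have hk0 : (0:ℝ) < (k:ℝ) := by exact_mod_cast hk
      have hk1 : (1:ℝ) ≤ (k:ℝ) := by exact_mod_cast hk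
      have hshift : A s k = A (s-1) k * (((k:ℝ) + s)/s) := by
        have h := A_shift (s := s-1) (by intro h; rw [sub_add_cancel] at h; linarith) k
        rw [sub_add_cancel] at h
        rw [h]
        congr 1
        congr 1
        ring
      have hrp : (k:ℝ)^(s-1) * (k:ℝ) = (k:ℝ)^s := by
        nth_rewrite 2 [show (k:ℝ) = (k:ℝ)^(1:ℝ) by rw [Real.rpow_one]]
        rw [← Real.rpow_add hk0]; norm_num
      obtain ⟨hlo, hhi⟩ := hb k hk
      have hPnn : (0:ℝ) ≤ (k:ℝ)^(s-1) := Real.rpow_nonneg hk0.le _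
      have hAnn : (0:ℝ) ≤ A (s-1) k := (A_pos (by linarith) k).le
      constructor
      · rw [hshift]
        have h1 : (k:ℝ)/s ≤ ((k:ℝ)+s)/s := by
          gcongr
          linarith
        have h2 : c₁ * (k:ℝ)^(s-1) * ((k:ℝ)/s) ≤ A (s-1) k * (((k:ℝ)+s)/s) := by
          apply mul_le_mul hlo h1 (by positivity) hAnn
        calc c₁/s * (k:ℝ)^s = c₁ * (k:ℝ)^(s-1) * ((k:ℝ)/s) := by
              rw [← hrp]; field_simp
          _ ≤ _ := h2
      · rw [hshift]
        have h1 : ((k:ℝ)+s)/s ≤ (k:ℝ)*(1+s)/s := by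
          gcongr
          nlinarith
        have h2 : A (s-1) k * (((k:ℝ)+s)/s) ≤ (c₂ * (k:ℝ)^(s-1)) * ((k:ℝ)*(1+s)/s) := by
          apply mul_le_mul hhi h1 (by positivity) (by positivity)
        calc A (s-1) k * (((k:ℝ)+s)/s) ≤ (c₂ * (k:ℝ)^(s-1)) * ((k:ℝ)*(1+s)/s) := h2
          _ = c₂*(1+s)/s * (k:ℝ)^s := by rw [← hrp]; field_simp


lemma rpow_mvt (r : ℝ) (x : ℝ) (hx : 0 < x) :
    ∃ c ∈ Set.Ioo x (x+1), (x+1)^r - x^r = r * c^(r-1) := by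
  obtain ⟨c, hc, heq⟩ := exists_hasDerivAt_eq_slope (fun y => y ^ r) (fun y => r * y^(r-1))
    (by linarith : x < x+1)
    (by
      apply ContinuousOn.rpow_const continuousOn_id
      intro y hy
      exact Or.inl (ne_of_gt (lt_of_lt_of_le hx hy.1)))
    (fun y hy => Real.hasDerivAt_rpow_const (Or.inl (ne_of_gt (lt_trans hx hy.1))))
  refine ⟨c, hc, ?_⟩
  rw [heq]
  simp

lemma sum_rpow_bounds (r : ℝ) (hr : 0 < r) :
    ∃ d₁ d₂ : ℝ, 0 < d₁ ∧ 0 < d₂ ∧ ∀ k : ℕ,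
      d₁ * (((k:ℝ)+1)^r - 1) ≤ (∑ i ∈ Finset.range k, ((i:ℝ)+1)^(r-1)) ∧
      (∑ i ∈ Finset.range k, ((i:ℝ)+1)^(r-1)) ≤ d₂ * (((k:ℝ)+1)^r - 1) := by
  set m : ℝ := min 1 (2^(r-1)) with hm
  set M : ℝ := max 1 (2^(r-1)) with hM
  have h2r : (0:ℝ) < 2^(r-1) := rpow_pos_of_pos two_pos _
  have hm0 : 0 < m := lt_min one_pos h2r
  have hM0 : 0 < M := lt_of_lt_of_le one_pos (le_max_left _ _)
  -- termwise bounds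
  have hterm : ∀ i : ℕ, r * m * ((i:ℝ)+1)^(r-1) ≤ ((i:ℝ)+2)^r - ((i:ℝ)+1)^r ∧
      ((i:ℝ)+2)^r - ((i:ℝ)+1)^r ≤ r * M * ((i:ℝ)+1)^(r-1) := by
    intro i
    have hx : (0:ℝ) < (i:ℝ)+1 := by positivity
    have hx1 : (1:ℝ) ≤ (i:ℝ)+1 := by
      have : (0:ℝ) ≤ (i:ℝ) := Nat.cast_nonneg i
      linarith
    obtain ⟨c, hc, heq⟩ := rpow_mvt r ((i:ℝ)+1) hx
    have he2 : (i:ℝ)+1+1 = (i:ℝ)+2 := by ring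
    rw [he2] at heq
    have hc0 : (0:ℝ) < c := lt_trans hx hc.1
    have hub : c^(r-1) ≤ M * ((i:ℝ)+1)^(r-1) := by
      rcases le_or_gt 1 r with h1 | h1
      · calc c^(r-1) ≤ ((i:ℝ)+2)^(r-1) := by
              apply Real.rpow_le_rpow hc0.le (by linarith [hc.2]) (by linarith)
          _ ≤ (2*((i:ℝ)+1))^(r-1) := by
              apply Real.rpow_le_rpow (by positivity) (by linarith) (by linarith)
          _ = 2^(r-1) * ((i:ℝ)+1)^(r-1) := Real.mul_rpow (by norm_num) hx.le
          _ ≤ M * ((i:ℝ)+1)^(r-1) := by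
              apply mul_le_mul_of_nonneg_right (le_max_right _ _) (Real.rpow_nonneg hx.le _)
      · calc c^(r-1) ≤ ((i:ℝ)+1)^(r-1) := by
              apply Real.rpow_le_rpow_of_nonpos hx hc.1.le (by linarith)
          _ ≤ M * ((i:ℝ)+1)^(r-1) := by
              apply le_mul_of_one_le_left (Real.rpow_nonneg hx.le _) (le_max_left _ _)
    have hlb : m * ((i:ℝ)+1)^(r-1) ≤ c^(r-1) := by
      rcases le_or_gt 1 r with h1 | h1
      · calc m * ((i:ℝ)+1)^(r-1) ≤ 1 * ((i:ℝ)+1)^(r-1) := by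
              apply mul_le_mul_of_nonneg_right (min_le_left _ _) (Real.rpow_nonneg hx.le _)
          _ = ((i:ℝ)+1)^(r-1) := one_mul _
          _ ≤ c^(r-1) := Real.rpow_le_rpow hx.le hc.1.le (by linarith)
      · calc m * ((i:ℝ)+1)^(r-1) ≤ 2^(r-1) * ((i:ℝ)+1)^(r-1) := by
              apply mul_le_mul_of_nonneg_right (min_le_right _ _) (Real.rpow_nonneg hx.le _)
          _ = (2*((i:ℝ)+1))^(r-1) := (Real.mul_rpow (by norm_num) hx.le).symm
          _ ≤ c^(r-1) := by
              apply Real.rpow_le_rpow_of_nonpos hc0 (by linarith [hc.2]) (by linarith)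
    constructor
    · rw [heq]
      calc r * m * ((i:ℝ)+1)^(r-1) = r * (m * ((i:ℝ)+1)^(r-1)) := by ring
        _ ≤ r * c^(r-1) := mul_le_mul_of_nonneg_left hlb hr.le
    · rw [heq]
      calc r * c^(r-1) ≤ r * (M * ((i:ℝ)+1)^(r-1)) := mul_le_mul_of_nonneg_left hub hr.le
        _ = r * M * ((i:ℝ)+1)^(r-1) := by ring
  -- telescoping
  have htel : ∀ k : ℕ, ∑ i ∈ Finset.range k, ((((i+1:ℕ):ℝ)+1)^r - (((i:ℕ):ℝ)+1)^r)
      = ((k:ℝ)+1)^r - 1 := by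
    intro k
    rw [Finset.sum_range_sub (fun i => (((i:ℕ):ℝ)+1)^r)]
    norm_num
  refine ⟨(r*M)⁻¹, (r*m)⁻¹, by positivity, by positivity, fun k => ?_⟩
  have hsum1 : r * m * (∑ i ∈ Finset.range k, ((i:ℝ)+1)^(r-1)) ≤ ((k:ℝ)+1)^r - 1 := by
    rw [← htel k, Finset.mul_sum]
    apply Finset.sum_le_sum
    intro i _
    have := (hterm i).1
    push_cast
    convert this using 2
    · rfl
    all_goals (push_cast; ring)
  have hsum2 : ((k:ℝ)+1)^r - 1 ≤ r * M * (∑ i ∈ Finset.range k, ((i:ℝ)+1)^(r-1)) := by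
    rw [← htel k, Finset.mul_sum]
    apply Finset.sum_le_sum
    intro i _
    have := (hterm i).2
    convert this using 2
    · rfl
    all_goals (push_cast; ring)
  constructor
  · have := mul_le_mul_of_nonneg_left hsum2 (by positivity : (0:ℝ) ≤ (r*M)⁻¹)
    calc (r*M)⁻¹ * (((k:ℝ)+1)^r - 1) ≤ (r*M)⁻¹ * (r * M * ∑ i ∈ Finset.range k, ((i:ℝ)+1)^(r-1)) := this
      _ = ∑ i ∈ Finset.range k, ((i:ℝ)+1)^(r-1) := by
          rw [← mul_assoc, inv_mul_cancel₀ (by positivity), one_mul]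
  · have := mul_le_mul_of_nonneg_left hsum1 (by positivity : (0:ℝ) ≤ (r*m)⁻¹)
    calc ∑ i ∈ Finset.range k, ((i:ℝ)+1)^(r-1)
        = (r*m)⁻¹ * (r * m * ∑ i ∈ Finset.range k, ((i:ℝ)+1)^(r-1)) := by
          rw [← mul_assoc, inv_mul_cancel₀ (by positivity), one_mul]
      _ ≤ (r*m)⁻¹ * (((k:ℝ)+1)^r - 1) := this


end GenBinomAux

open GenBinomAux in
/-- For `ν > 1/2` there exist `Q̃₁, Q̃₂ > 0` such that for all `ℓ`:
`∑_{k=0}^ℓ binom(−ν,k)² ≤ Q̃₁ (max(ℓ,1))^{2ν−1}` and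
`∑_{k=0}^ℓ ∑_{n=0}^k binom(−ν,n)² ≥ Q̃₂ (max(ℓ,1))^{2ν}`. -/
theorem genBinom_sq_sum_bounds (ν : ℝ) (hν : 1 / 2 < ν) :
    ∃ Q₁ Q₂ : ℝ, 0 < Q₁ ∧ 0 < Q₂ ∧ ∀ ℓ : ℕ,
      (∑ k ∈ Finset.range (ℓ + 1), (genBinom (-ν) k) ^ 2
          ≤ Q₁ * ((max ℓ 1 : ℕ) : ℝ) ^ (2 * ν - 1)) ∧
      (Q₂ * ((max ℓ 1 : ℕ) : ℝ) ^ (2 * ν)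
          ≤ ∑ k ∈ Finset.range (ℓ + 1), ∑ n ∈ Finset.range (k + 1), (genBinom (-ν) n) ^ 2) := by
  set s : ℝ := ν - 1 with hsdef
  set r : ℝ := 2*ν - 1 with hrdef
  set r' : ℝ := 2*ν with hr'def
  have hs1 : -1 < s := by rw [hsdef]; linarith
  have hr0 : 0 < r := by rw [hrdef]; linarith
  have hr'0 : 0 < r' := by rw [hr'def]; linarith
  have hrr : s + s = r - 1 := by show ν - 1 + (ν - 1) = 2*ν - 1 - 1; ring
  have hr'r : r' - 1 = r := by show 2*ν - 1 = 2*ν - 1; ring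
  obtain ⟨n, hn⟩ : ∃ n : ℕ, s ≤ n := exists_nat_ge s
  obtain ⟨c₁, c₂, hc₁, hc₂, hA⟩ := A_bounds n s hs1 hn
  obtain ⟨d₁, d₂, hd₁, hd₂, hsum⟩ := sum_rpow_bounds r hr0
  obtain ⟨e₁, e₂, he₁, he₂, hsum'⟩ := sum_rpow_bounds r' hr'0
  -- squared pointwise bounds
  have hpow2 : ∀ i : ℕ, (((i:ℝ)+1)^s)^2 = ((i:ℝ)+1)^(r-1) := by
    intro i
    rw [sq, ← Real.rpow_add (by positivity), hrr]
  have hKcast : ∀ i : ℕ, ((i+1:ℕ):ℝ) = (i:ℝ)+1 := by intro i; push_cast; ring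
  have hsq_up : ∀ i : ℕ, (A s (i+1))^2 ≤ c₂^2 * ((i:ℝ)+1)^(r-1) := by
    intro i
    have h := (hA (i+1) (by omega)).2
    rw [hKcast i] at h
    calc (A s (i+1))^2 ≤ (c₂ * ((i:ℝ)+1)^s)^2 :=
          pow_le_pow_left₀ (A_pos hs1 (i+1)).le h 2
      _ = c₂^2 * (((i:ℝ)+1)^s)^2 := by ring
      _ = c₂^2 * ((i:ℝ)+1)^(r-1) := by rw [hpow2 i]
  have hsq_lo : ∀ i : ℕ, c₁^2 * ((i:ℝ)+1)^(r-1) ≤ (A s (i+1))^2 := by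
    intro i
    have h := (hA (i+1) (by omega)).1
    rw [hKcast i] at h
    calc c₁^2 * ((i:ℝ)+1)^(r-1) = (c₁ * ((i:ℝ)+1)^s)^2 := by rw [← hpow2 i]; ring
      _ ≤ (A s (i+1))^2 := pow_le_pow_left₀ (by positivity) h 2
  -- sum decomposition
  have eq1 : ∀ N : ℕ, ∑ k ∈ Finset.range (N+1), (genBinom (-ν) k)^2
      = 1 + ∑ i ∈ Finset.range N, (A s (i+1))^2 := by
    intro N
    have hgb : ∀ k : ℕ, (genBinom (-ν) k)^2 = (A s k)^2 := fun k => genBinom_sq ν k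
    rw [Finset.sum_congr rfl fun k _ => hgb k, Finset.sum_range_succ']
    have : A s 0 = 1 := by simp [A]
    rw [this]
    ring
  refine ⟨1 + c₂^2*d₂*2^r, min (c₁^2*d₁) 1 * e₁ * ((2:ℝ)^r' - 1)/(2:ℝ)^r', ?_, ?_, fun ℓ => ?_⟩
  · have h2r : (0:ℝ) < 2^r := rpow_pos_of_pos two_pos _
    positivity
  · have ht1 : (1:ℝ) < 2^r' := by
      calc (1:ℝ) = (2:ℝ)^(0:ℝ) := by rw [Real.rpow_zero]
        _ < 2^r' := Real.rpow_lt_rpow_of_exponent_lt one_lt_two hr'0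
    have hβ : (0:ℝ) < min (c₁^2*d₁) 1 := lt_min (by positivity) one_pos
    have h2r' : (0:ℝ) < 2^r' := rpow_pos_of_pos two_pos _
    apply div_pos ?_ h2r'
    apply mul_pos (mul_pos hβ he₁)
    linarith
  set β : ℝ := min (c₁^2*d₁) 1 with hβdef
  have hβ0 : 0 < β := lt_min (by positivity) one_pos
  have hβ1 : β ≤ 1 := min_le_right _ _
  have hβd : β ≤ c₁^2*d₁ := min_le_left _ _
  set L : ℝ := ((max ℓ 1 : ℕ) : ℝ) with hLdef
  have hL1 : (1:ℝ) ≤ L := by rw [hLdef]; exact_mod_cast le_max_right ℓ 1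
  have hL0 : (0:ℝ) < L := lt_of_lt_of_le one_pos hL1
  have hLr1 : (1:ℝ) ≤ L^r := by
    calc (1:ℝ) = L^(0:ℝ) := (Real.rpow_zero L).symm
      _ ≤ L^r := Real.rpow_le_rpow_of_exponent_le hL1 hr0.le
  constructor
  · -- first bound
    have hl2L : (ℓ:ℝ)+1 ≤ 2*L := by
      have h : ℓ+1 ≤ 2*max ℓ 1 := by omega
      rw [hLdef]
      exact_mod_cast h
    have h1 : ((ℓ:ℝ)+1)^r ≤ 2^r * L^r := by
      calc ((ℓ:ℝ)+1)^r ≤ (2*L)^r := Real.rpow_le_rpow (by positivity) hl2L hr0.le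
        _ = 2^r * L^r := Real.mul_rpow (by norm_num) hL0.le
    calc ∑ k ∈ Finset.range (ℓ+1), (genBinom (-ν) k)^2
        = 1 + ∑ i ∈ Finset.range ℓ, (A s (i+1))^2 := eq1 ℓ
      _ ≤ 1 + ∑ i ∈ Finset.range ℓ, c₂^2 * ((i:ℝ)+1)^(r-1) := by
          apply add_le_add_right (Finset.sum_le_sum fun i _ => hsq_up i)
      _ = 1 + c₂^2 * ∑ i ∈ Finset.range ℓ, ((i:ℝ)+1)^(r-1) := by rw [Finset.mul_sum]
      _ ≤ 1 + c₂^2 * (d₂ * (((ℓ:ℝ)+1)^r - 1)) := by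
          apply add_le_add_right (mul_le_mul_of_nonneg_left (hsum ℓ).2 (sq_nonneg c₂))
      _ ≤ (1 + c₂^2*d₂*2^r) * L^r := by
          have hCd : (0:ℝ) ≤ c₂^2*d₂ := by positivity
          have hh := mul_le_mul_of_nonneg_left h1 hCd
          nlinarith [hh, hLr1, hCd]
  · -- second bound
    have hS : ∀ k : ℕ, β * (((k:ℝ))+1)^r ≤ ∑ m ∈ Finset.range (k+1), (genBinom (-ν) m)^2 := by
      intro k
      rw [eq1 k]
      have hXk : (1:ℝ) ≤ ((k:ℝ)+1)^r := by
        calc (1:ℝ) = ((k:ℝ)+1)^(0:ℝ) := by rw [Real.rpow_zero]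
          _ ≤ ((k:ℝ)+1)^r := Real.rpow_le_rpow_of_exponent_le
              (by have : (0:ℝ) ≤ (k:ℝ) := Nat.cast_nonneg k; linarith) hr0.le
      have hlow : c₁^2 * (d₁ * (((k:ℝ)+1)^r - 1)) ≤ ∑ i ∈ Finset.range k, (A s (i+1))^2 := by
        calc c₁^2 * (d₁ * (((k:ℝ)+1)^r - 1)) ≤ c₁^2 * ∑ i ∈ Finset.range k, ((i:ℝ)+1)^(r-1) :=
              mul_le_mul_of_nonneg_left (hsum k).1 (sq_nonneg c₁)
          _ = ∑ i ∈ Finset.range k, c₁^2 * ((i:ℝ)+1)^(r-1) := by rw [Finset.mul_sum]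
          _ ≤ ∑ i ∈ Finset.range k, (A s (i+1))^2 := Finset.sum_le_sum fun i _ => hsq_lo i
      nlinarith [mul_le_mul_of_nonneg_right hβd (by linarith : (0:ℝ) ≤ ((k:ℝ)+1)^r - 1),
        mul_le_mul_of_nonneg_right hβ1 (by linarith : (0:ℝ) ≤ ((k:ℝ)+1)^r - 1)]
    have houter : β * (e₁ * (((ℓ:ℝ)+2)^r' - 1))
        ≤ ∑ k ∈ Finset.range (ℓ+1), ∑ m ∈ Finset.range (k+1), (genBinom (-ν) m)^2 := by
      have h := (hsum' (ℓ+1)).1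
      rw [hr'r] at h
      have hc : ((ℓ+1:ℕ):ℝ)+1 = (ℓ:ℝ)+2 := by push_cast; ring
      rw [hc] at h
      calc β * (e₁ * (((ℓ:ℝ)+2)^r' - 1)) ≤ β * ∑ i ∈ Finset.range (ℓ+1), ((i:ℝ)+1)^r :=
            mul_le_mul_of_nonneg_left h hβ0.le
        _ = ∑ i ∈ Finset.range (ℓ+1), β * ((i:ℝ)+1)^r := by rw [Finset.mul_sum]
        _ ≤ _ := Finset.sum_le_sum fun k _ => hS k
    -- now compare β e₁ ((ℓ+2)^r' - 1) with Q₂ L^r'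
    set t : ℝ := (2:ℝ)^r' with htdef
    have ht1 : (1:ℝ) < t := by
      rw [htdef]
      calc (1:ℝ) = (2:ℝ)^(0:ℝ) := by rw [Real.rpow_zero]
        _ < 2^r' := Real.rpow_lt_rpow_of_exponent_lt one_lt_two hr'0
    have ht0 : 0 < t := lt_trans one_pos ht1
    have hX2 : t ≤ ((ℓ:ℝ)+2)^r' := by
      rw [htdef]
      apply Real.rpow_le_rpow (by norm_num) (by have : (0:ℝ) ≤ (ℓ:ℝ) := Nat.cast_nonneg ℓ; linarith) hr'0.le
    have hLX : L^r' ≤ ((ℓ:ℝ)+2)^r' := by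
      apply Real.rpow_le_rpow hL0.le ?_ hr'0.le
      have h2 : max ℓ 1 ≤ ℓ + 2 := by omega
      have h3 : ((max ℓ 1:ℕ):ℝ) ≤ ((ℓ+2:ℕ):ℝ) := by exact_mod_cast h2
      rw [hLdef]
      push_cast at h3 ⊢
      linarith
    have key : (t-1)/t * L^r' ≤ ((ℓ:ℝ)+2)^r' - 1 := by
      have h1 : (t-1)/t * L^r' ≤ (t-1)/t * ((ℓ:ℝ)+2)^r' := by
        exact mul_le_mul_of_nonneg_left hLX (div_nonneg (by linarith) ht0.le)
      have h2 : (t-1)/t * ((ℓ:ℝ)+2)^r' ≤ ((ℓ:ℝ)+2)^r' - 1 := by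
        rw [div_mul_eq_mul_div, div_le_iff₀ ht0]
        nlinarith
      linarith
    calc β * e₁ * (t - 1)/t * L^r' = β * e₁ * ((t-1)/t * L^r') := by ring
      _ ≤ β * e₁ * (((ℓ:ℝ)+2)^r' - 1) := mul_le_mul_of_nonneg_left key (by positivity)
      _ = β * (e₁ * (((ℓ:ℝ)+2)^r' - 1)) := by ring
      _ ≤ _ := houter
end

section
/- Let ν > 0, Q₁, Q₂ > 0, and let γ : ℕ → ℝ be a sequence such that for all ℓ ∈ ℕ: Σ_{k=0}^{ℓ} γ_k² ≤ Q₂ (max(ℓ,1))^{2ν−1} and Σ_{k=0}^{ℓ} Σ_{n=0}^{k} γ_n² ≥ Q₁ (max(ℓ,1))^{2ν}. Then necessarily Q₁ ≤ (1 + 2^{2ν}/(2ν)) Q₂. -/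
open Real

lemma self_le_two_rpow (x : ℝ) (hx : 0 < x) : x ≤ (2:ℝ) ^ x := by
  rw [Real.rpow_def_of_pos two_pos]
  have h1 : Real.log 2 * x / 2 + 1 ≤ Real.exp (Real.log 2 * x / 2) :=
    Real.add_one_le_exp _
  have h2 : Real.exp (Real.log 2 * x) = (Real.exp (Real.log 2 * x / 2)) ^ 2 := by
    rw [sq, ← Real.exp_add]; ring_nf
  have hlog : (0.6931471803 : ℝ) < Real.log 2 := Real.log_two_gt_d9
  have hu : 0 ≤ Real.log 2 * x / 2 := by nlinarith
  have h3 : (Real.log 2 * x / 2 + 1) ^ 2 ≤ (Real.exp (Real.log 2 * x / 2)) ^ 2 :=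
    pow_le_pow_left₀ (by linarith) h1 2
  rw [h2]
  nlinarith [sq_nonneg x, sq_nonneg (x - 2), sq_nonneg (Real.log 2 * x / 2)]

/-- If a sequence `γ` satisfies the two-sided ill-posedness conditions of degree `ν` with
constants `Q₁, Q₂`, then necessarily `Q₁ ≤ (1 + 2^{2ν}/(2ν)) Q₂`. -/
theorem dip_constants_compatible (ν Q₁ Q₂ : ℝ) (hν : 0 < ν) (hQ₁ : 0 < Q₁) (hQ₂ : 0 < Q₂)
    (γ : ℕ → ℝ)
    (h_upper : ∀ ℓ : ℕ,
      ∑ k ∈ Finset.range (ℓ + 1), (γ k) ^ 2 ≤ Q₂ * ((max ℓ 1 : ℕ) : ℝ) ^ (2 * ν - 1))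
    (h_lower : ∀ ℓ : ℕ,
      Q₁ * ((max ℓ 1 : ℕ) : ℝ) ^ (2 * ν)
        ≤ ∑ k ∈ Finset.range (ℓ + 1), ∑ n ∈ Finset.range (k + 1), (γ n) ^ 2) :
    Q₁ ≤ (1 + 2 ^ (2 * ν) / (2 * ν)) * Q₂ := by
  have h0 := h_upper 0
  have h1 := h_upper 1
  have hl := h_lower 1
  simp [Finset.sum_range_succ, Real.one_rpow] at h0 h1 hl
  -- Q₁ ≤ 2 * Q₂
  have hQ : Q₁ ≤ 2 * Q₂ := by linarith
  have hx : (0:ℝ) < 2 * ν := by linarith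
  have hb : 2 * ν ≤ (2:ℝ) ^ (2 * ν) := self_le_two_rpow _ hx
  have h2 : (1:ℝ) ≤ (2:ℝ) ^ (2 * ν) / (2 * ν) := (one_le_div hx).mpr hb
  nlinarith
end

section
/- There exist universal constants β₀ > 0 and c₀ > 0 such that the following holds for every ℓ ∈ ℕ: if b = (b_0, …, b_ℓ) is a vector of independent standard Gaussian real random variables and B^ℓ = T_ℓ(b) is the (ℓ+1)×(ℓ+1) lower triangular Toeplitz matrix with first column b, then for all t ≥ β₀, P( ‖B^ℓ‖_op > t · ( max(ℓ,1) · log(max(ℓ,2)) )^{1/2} ) ≤ exp(−c₀ t²). -/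
open MeasureTheory ProbabilityTheory

/-- The spectral (operator) norm of a real matrix. -/
noncomputable def matOpNorm {n m : ℕ} (A : Matrix (Fin n) (Fin m) ℝ) : ℝ :=
  ‖LinearMap.toContinuousLinearMap (Matrix.toEuclideanLin A)‖

/-- The `(ℓ+1)×(ℓ+1)` lower triangular Toeplitz matrix with first column `b`. -/
def toepOfVec {ℓ : ℕ} (b : Fin (ℓ + 1) → ℝ) : Matrix (Fin (ℓ + 1)) (Fin (ℓ + 1)) ℝ :=
  Matrix.of fun i j =>
    if (j : ℕ) ≤ (i : ℕ) then
      b ⟨(i : ℕ) - (j : ℕ), lt_of_le_of_lt (Nat.sub_le _ _) i.isLt⟩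
    else 0

open scoped ENNReal


open Finset Complex in
lemma parseval_aux {n : ℕ} (hn : 0 < n) (p : ℕ → ℂ) :
    ∑ m ∈ range n, normSq (∑ k ∈ range n, p k * Complex.exp (2 * Real.pi * I / n) ^ (k * m))
      = n * ∑ k ∈ range n, normSq (p k) := by
  set ω : ℂ := Complex.exp (2 * Real.pi * I / n) with hω
  have hprim : IsPrimitiveRoot ω n := Complex.isPrimitiveRoot_exp n hn.ne'
  have habs : ‖ω‖ = 1 := by
    rw [hω, show (2 * (Real.pi:ℂ) * I / n) = ((2 * Real.pi / n : ℝ) : ℂ) * I by push_cast; ring]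
    exact Complex.norm_exp_ofReal_mul_I _
  have hω1 : ∀ k : ℕ, (ω ^ k) * (starRingEnd ℂ) (ω ^ k) = 1 := by
    intro k
    rw [Complex.mul_conj, Complex.normSq_eq_norm_sq, norm_pow, habs, one_pow, one_pow]
    exact Complex.ofReal_one
  have key : ∀ k ∈ range n, ∀ j ∈ range n,
      (∑ m ∈ range n, (ω ^ k * (starRingEnd ℂ) (ω ^ j)) ^ m) = if k = j then (n : ℂ) else 0 := by
    intro k hk j hj
    by_cases hkj : k = j
    · subst hkj
      rw [hω1 k]
      simp
    · rw [if_neg hkj]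
      have hz1 : ω ^ k * (starRingEnd ℂ) (ω ^ j) ≠ 1 := by
        intro h
        apply hkj
        refine hprim.pow_inj (mem_range.1 hk) (mem_range.1 hj) ?_
        have h2 : (starRingEnd ℂ) (ω ^ j) * ω ^ j = 1 := by rw [mul_comm]; exact hω1 j
        have h3 : ω ^ k * ((starRingEnd ℂ) (ω ^ j) * ω ^ j) = ω ^ j := by
          rw [← mul_assoc, h, one_mul]
        rwa [h2, mul_one] at h3
      have hzn : (ω ^ k * (starRingEnd ℂ) (ω ^ j)) ^ n = 1 := by
        rw [mul_pow, ← pow_mul, mul_comm k n, pow_mul, hprim.pow_eq_one, one_pow, ← map_pow,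
          ← pow_mul, mul_comm j n, pow_mul, hprim.pow_eq_one, one_pow, map_one, mul_one]
      rw [geom_sum_eq hz1, hzn, sub_self, zero_div]
  -- complex version
  have main : ∑ m ∈ range n, ((normSq (∑ k ∈ range n, p k * ω ^ (k * m)) : ℝ) : ℂ)
      = (n : ℂ) * ∑ k ∈ range n, ((normSq (p k) : ℝ) : ℂ) := by
    have expand : ∀ m : ℕ, ((normSq (∑ k ∈ range n, p k * ω ^ (k * m)) : ℝ) : ℂ)
        = ∑ k ∈ range n, ∑ j ∈ range n,
            p k * (starRingEnd ℂ) (p j) * (ω ^ k * (starRingEnd ℂ) (ω ^ j)) ^ m := by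
      intro m
      rw [← Complex.mul_conj, map_sum, sum_mul_sum]
      refine Finset.sum_congr rfl fun k _ => Finset.sum_congr rfl fun j _ => ?_
      rw [map_mul, mul_pow, ← map_pow, ← pow_mul, ← pow_mul]
      ring
    simp_rw [expand]
    rw [Finset.sum_comm]
    have inner : ∀ k ∈ range n,
        (∑ m ∈ range n, ∑ j ∈ range n,
            p k * (starRingEnd ℂ) (p j) * (ω ^ k * (starRingEnd ℂ) (ω ^ j)) ^ m)
          = p k * (starRingEnd ℂ) (p k) * n := by
      intro k hk
      rw [Finset.sum_comm]
      have : ∀ j ∈ range n,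
          (∑ m ∈ range n, p k * (starRingEnd ℂ) (p j) * (ω ^ k * (starRingEnd ℂ) (ω ^ j)) ^ m)
            = if k = j then p k * (starRingEnd ℂ) (p j) * n else 0 := by
        intro j hj
        rw [← Finset.mul_sum, key k hk j hj]
        split <;> simp
      rw [Finset.sum_congr rfl this, Finset.sum_ite_eq (range n) k
        (fun j => p k * (starRingEnd ℂ) (p j) * n), if_pos hk]
    rw [Finset.sum_congr rfl inner, Finset.mul_sum]
    refine Finset.sum_congr rfl fun k _ => ?_
    rw [Complex.mul_conj]
    ring
  exact_mod_cast main

/-- The trigonometric sum `∑ k, b k ω^(k m)` at the `2ℓ+2`-th roots of unity. -/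
noncomputable def trigSum {ℓ : ℕ} (b : Fin (ℓ + 1) → ℝ) (m : ℕ) : ℂ :=
  ∑ k : Fin (ℓ + 1), (b k : ℂ) *
    Complex.exp (2 * Real.pi * Complex.I / ((2 * ℓ + 2 : ℕ) : ℂ)) ^ ((k : ℕ) * m)

open Finset Polynomial in
lemma coeff_polyOf {N : ℕ} (c : Fin N → ℂ) (u : ℕ) :
    (∑ k : Fin N, Polynomial.monomial (k : ℕ) (c k)).coeff u
      = if h : u < N then c ⟨u, h⟩ else 0 := by
  rw [Polynomial.finset_sum_coeff]
  simp_rw [Polynomial.coeff_monomial]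
  by_cases h : u < N
  · rw [dif_pos h, Finset.sum_eq_single (⟨u, h⟩ : Fin N)]
    · simp
    · intro k _ hk
      rw [if_neg]
      exact fun hku => hk (by ext; simpa using hku)
    · simp
  · rw [dif_neg h]
    refine Finset.sum_eq_zero fun k _ => ?_
    rw [if_neg]
    exact fun hku => h (hku ▸ k.isLt)

open Finset Polynomial in
lemma matOpNorm_toep_le {ℓ : ℕ} (b : Fin (ℓ + 1) → ℝ) (K : ℝ) (hK : 0 ≤ K)
    (hb : ∀ m ∈ Finset.range (2 * ℓ + 2), ‖trigSum b m‖ ≤ K) :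
    matOpNorm (toepOfVec b) ≤ K := by
  apply ContinuousLinearMap.opNorm_le_bound _ hK
  intro x
  set n := 2 * ℓ + 2 with hn
  have hnpos : 0 < n := by omega
  set ω : ℂ := Complex.exp (2 * Real.pi * Complex.I / ((n : ℕ) : ℂ)) with hω
  -- extended coefficient functions
  set be : ℕ → ℝ := fun u => if h : u < (ℓ + 1) then b ⟨u, h⟩ else 0 with hbe
  set xe : ℕ → ℝ := fun u => if h : u < (ℓ + 1) then x ⟨u, h⟩ else 0 with hxe
  set pb : Polynomial ℂ := ∑ k : Fin (ℓ + 1), Polynomial.monomial (k : ℕ) ((b k : ℝ) : ℂ) with hpb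
  set px : Polynomial ℂ := ∑ k : Fin (ℓ + 1), Polynomial.monomial (k : ℕ) ((x k : ℝ) : ℂ) with hpx
  have hcb : ∀ u : ℕ, pb.coeff u = ((be u : ℝ) : ℂ) := by
    intro u
    rw [hpb, coeff_polyOf]
    by_cases h : u < (ℓ + 1)
    · rw [dif_pos h, show be u = b ⟨u, h⟩ from dif_pos h]
    · rw [dif_neg h, show be u = 0 from dif_neg h, Complex.ofReal_zero]
  have hcx : ∀ u : ℕ, px.coeff u = ((xe u : ℝ) : ℂ) := by
    intro u
    rw [hpx, coeff_polyOf]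
    by_cases h : u < (ℓ + 1)
    · rw [dif_pos h, show xe u = x ⟨u, h⟩ from dif_pos h]
    · rw [dif_neg h, show xe u = 0 from dif_neg h, Complex.ofReal_zero]
  -- the matrix-vector product is given by coefficients of the product polynomial
  have hmv : ∀ i : Fin (ℓ + 1), (pb * px).coeff (i : ℕ)
      = (((toepOfVec b).mulVec (fun j => x j) i : ℝ) : ℂ) := by
    intro i
    rw [Polynomial.coeff_mul, Finset.Nat.sum_antidiagonal_eq_sum_range_succ_mk]
    have h1 : ∀ j ∈ Finset.range ((i : ℕ) + 1),
        pb.coeff j * px.coeff ((i : ℕ) - j) = ((be j * xe ((i : ℕ) - j) : ℝ) : ℂ) := by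
      intro j hj
      rw [hcb, hcx, Complex.ofReal_mul]
    rw [show (i : ℕ).succ = (i : ℕ) + 1 from rfl, Finset.sum_congr rfl h1, ← Complex.ofReal_sum]
    congr 1
    rw [← Finset.sum_range_reflect (fun j => be j * xe ((i : ℕ) - j)) ((i : ℕ) + 1)]
    have hrefl : ∀ j ∈ Finset.range ((i : ℕ) + 1),
        be ((i : ℕ) + 1 - 1 - j) * xe ((i : ℕ) - ((i : ℕ) + 1 - 1 - j))
          = be ((i : ℕ) - j) * xe j := by
      intro j hj
      have hj' : j ≤ (i : ℕ) := Nat.lt_succ_iff.1 (Finset.mem_range.1 hj)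
      congr 1 <;> congr 1 <;> omega
    rw [Finset.sum_congr rfl hrefl]
    -- real identity
    have h2 : (toepOfVec b).mulVec (fun j => x j) i
        = ∑ j ∈ Finset.range (ℓ + 1), (if j ≤ (i : ℕ) then be ((i : ℕ) - j) else 0) * xe j := by
      simp only [Matrix.mulVec, dotProduct]
      rw [← Fin.sum_univ_eq_sum_range (fun j => (if j ≤ (i : ℕ) then be ((i : ℕ) - j) else 0) * xe j) (ℓ + 1)]
      refine Finset.sum_congr rfl fun j _ => ?_
      simp only [toepOfVec, Matrix.of_apply, hbe, hxe]
      rw [dif_pos j.isLt]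
      by_cases h : (j : ℕ) ≤ (i : ℕ)
      · rw [if_pos h, if_pos h, dif_pos (lt_of_le_of_lt (Nat.sub_le _ _) i.isLt)]
      · rw [if_neg h, if_neg h]
    rw [h2]
    rw [← Finset.sum_subset (Finset.range_subset_range.2 (by omega : (i : ℕ) + 1 ≤ (ℓ + 1)))]
    · exact Finset.sum_congr rfl fun j hj =>
        by rw [if_pos (Nat.lt_succ_iff.1 (Finset.mem_range.1 hj))]
    · intro j hj hj'
      rw [if_neg (by simp at hj'; omega), zero_mul]
  -- degree bound
  have hdegb : pb.natDegree ≤ ℓ := by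
    apply Polynomial.natDegree_sum_le_of_forall_le
    intro k _
    exact (Polynomial.natDegree_monomial_le _).trans (Nat.lt_succ_iff.1 k.isLt)
  have hdegx : px.natDegree ≤ ℓ := by
    apply Polynomial.natDegree_sum_le_of_forall_le
    intro k _
    exact (Polynomial.natDegree_monomial_le _).trans (Nat.lt_succ_iff.1 k.isLt)
  have hdeg : (pb * px).natDegree < n := by
    have := Polynomial.natDegree_mul_le (p := pb) (q := px)
    omega
  have hdegx' : px.natDegree < n := by omega
  -- evaluations at roots of unity
  have hevb : ∀ m : ℕ, pb.eval (ω ^ m) = trigSum b m := by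
    intro m
    rw [hpb, Polynomial.eval_finset_sum]
    unfold trigSum
    rw [← hn]
    refine Finset.sum_congr rfl fun k _ => ?_
    rw [Polynomial.eval_monomial, ← pow_mul, mul_comm m (k : ℕ)]
  have hevx : ∀ m : ℕ, px.eval (ω ^ m) = trigSum (fun j => x j) m := by
    intro m
    rw [hpx, Polynomial.eval_finset_sum]
    unfold trigSum
    rw [← hn]
    refine Finset.sum_congr rfl fun k _ => ?_
    rw [Polynomial.eval_monomial, ← pow_mul, mul_comm m (k : ℕ)]
  -- Parseval for polynomials of degree < n
  have hpars : ∀ q : Polynomial ℂ, q.natDegree < n →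
      ∑ m ∈ Finset.range n, Complex.normSq (q.eval (ω ^ m))
        = n * ∑ r ∈ Finset.range n, Complex.normSq (q.coeff r) := by
    intro q hq
    have hpa := parseval_aux (n := n) hnpos (fun r => q.coeff r)
    rw [← hpa]
    refine Finset.sum_congr rfl fun m _ => ?_
    congr 1
    rw [Polynomial.eval_eq_sum_range' hq]
    refine Finset.sum_congr rfl fun k _ => ?_
    rw [← pow_mul, mul_comm m k]
  -- coefficient sums
  have hx2 : ∑ r ∈ Finset.range n, Complex.normSq (px.coeff r) = ∑ j : Fin (ℓ + 1), (x j) ^ 2 := by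
    rw [← Finset.sum_subset (Finset.range_subset_range.2 (by omega : (ℓ + 1) ≤ n))]
    · rw [← Fin.sum_univ_eq_sum_range (fun r => Complex.normSq (px.coeff r)) (ℓ + 1)]
      refine Finset.sum_congr rfl fun j _ => ?_
      rw [hcx, Complex.normSq_ofReal,
        show xe (j : ℕ) = x j by rw [show xe (j : ℕ) = x ⟨(j : ℕ), j.isLt⟩ from dif_pos j.isLt], sq]
    · intro r _ hr'
      rw [hcx, show xe r = 0 from dif_neg (by simp only [Finset.mem_range] at hr'; omega),
        Complex.ofReal_zero, Complex.normSq_zero]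
  -- main chain
  set y : Fin (ℓ + 1) → ℝ := (toepOfVec b).mulVec (fun j => x j) with hy
  have hchain : (n : ℝ) * ∑ i : Fin (ℓ + 1), (y i) ^ 2 ≤ (n : ℝ) * (K ^ 2 * ∑ j : Fin (ℓ + 1), (x j) ^ 2) := by
    have e1 : ∑ i : Fin (ℓ + 1), (y i) ^ 2 = ∑ i ∈ Finset.range (ℓ + 1), Complex.normSq ((pb * px).coeff i) := by
      rw [← Fin.sum_univ_eq_sum_range (fun i => Complex.normSq ((pb * px).coeff i)) (ℓ + 1)]
      refine Finset.sum_congr rfl fun i _ => ?_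
      rw [hmv i, Complex.normSq_ofReal, sq]
    have e2 : ∑ i ∈ Finset.range (ℓ + 1), Complex.normSq ((pb * px).coeff i)
        ≤ ∑ r ∈ Finset.range n, Complex.normSq ((pb * px).coeff r) :=
      Finset.sum_le_sum_of_subset_of_nonneg (Finset.range_subset_range.2 (by omega))
        (fun r _ _ => Complex.normSq_nonneg _)
    have e3 : (n : ℝ) * ∑ r ∈ Finset.range n, Complex.normSq ((pb * px).coeff r)
        = ∑ m ∈ Finset.range n, Complex.normSq ((pb * px).eval (ω ^ m)) := (hpars _ hdeg).symm
    have e4 : ∑ m ∈ Finset.range n, Complex.normSq ((pb * px).eval (ω ^ m))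
        ≤ K ^ 2 * ∑ m ∈ Finset.range n, Complex.normSq (px.eval (ω ^ m)) := by
      refine (Finset.sum_le_sum fun m hm => ?_).trans_eq (Finset.mul_sum _ _ _).symm
      rw [Polynomial.eval_mul, Complex.normSq_mul]
      have h1 : Complex.normSq (pb.eval (ω ^ m)) ≤ K ^ 2 := by
        rw [hevb m, ← Complex.sq_norm]
        exact pow_le_pow_left₀ (norm_nonneg _) (hb m hm) 2
      exact mul_le_mul_of_nonneg_right h1 (Complex.normSq_nonneg _)
    have e5 : ∑ m ∈ Finset.range n, Complex.normSq (px.eval (ω ^ m))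
        = (n : ℝ) * ∑ j : Fin (ℓ + 1), (x j) ^ 2 := by rw [hpars px hdegx', hx2]
    calc (n : ℝ) * ∑ i : Fin (ℓ + 1), (y i) ^ 2
        = (n : ℝ) * ∑ i ∈ Finset.range (ℓ + 1), Complex.normSq ((pb * px).coeff i) := by rw [e1]
      _ ≤ (n : ℝ) * ∑ r ∈ Finset.range n, Complex.normSq ((pb * px).coeff r) := by
          have : (0:ℝ) ≤ (n : ℝ) := by positivity
          exact mul_le_mul_of_nonneg_left e2 this
      _ = ∑ m ∈ Finset.range n, Complex.normSq ((pb * px).eval (ω ^ m)) := e3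
      _ ≤ K ^ 2 * ∑ m ∈ Finset.range n, Complex.normSq (px.eval (ω ^ m)) := e4
      _ = K ^ 2 * ((n : ℝ) * ∑ j : Fin (ℓ + 1), (x j) ^ 2) := by rw [e5]
      _ = (n : ℝ) * (K ^ 2 * ∑ j : Fin (ℓ + 1), (x j) ^ 2) := by ring
  have key : ∑ i : Fin (ℓ + 1), (y i) ^ 2 ≤ K ^ 2 * ∑ j : Fin (ℓ + 1), (x j) ^ 2 :=
    le_of_mul_le_mul_left hchain (by positivity)
  -- norms
  have hnx : ‖x‖ = Real.sqrt (∑ j : Fin (ℓ + 1), (x j) ^ 2) := by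
    rw [EuclideanSpace.norm_eq]
    congr 1
    exact Finset.sum_congr rfl fun j _ => by rw [Real.norm_eq_abs, sq_abs]
  have hny : ‖(LinearMap.toContinuousLinearMap (Matrix.toEuclideanLin (toepOfVec b))) x‖
      = Real.sqrt (∑ i : Fin (ℓ + 1), (y i) ^ 2) := by
    rw [EuclideanSpace.norm_eq]
    congr 1
    refine Finset.sum_congr rfl fun i _ => ?_
    rw [Real.norm_eq_abs, sq_abs]
    rfl
  rw [hnx, hny]
  have : Real.sqrt (∑ i : Fin (ℓ + 1), (y i) ^ 2) ≤ Real.sqrt (K ^ 2 * ∑ j : Fin (ℓ + 1), (x j) ^ 2) :=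
    Real.sqrt_le_sqrt key
  refine this.trans ?_
  rw [Real.sqrt_mul (sq_nonneg K), Real.sqrt_sq hK]

lemma lintegral_pi_prod : ∀ {n : ℕ} (μ : Fin n → Measure ℝ), (∀ i, SigmaFinite (μ i)) →
    ∀ (f : Fin n → ℝ → ℝ≥0∞), (∀ i, Measurable (f i)) →
    ∫⁻ x, ∏ i, f i (x i) ∂(Measure.pi μ) = ∏ i, ∫⁻ y, f i y ∂(μ i) := by
  intro n
  induction n with
  | zero => intro μ _ f _; simp [Measure.pi_empty_univ]
  | succ n ih =>
    intro μ hμ f hf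
    have := hμ
    have hmp := (measurePreserving_piFinSuccAbove μ 0).symm
    have hFmeas : Measurable fun x : (i : Fin (n+1)) → ℝ => ∏ i, f i (x i) := by
      exact Finset.measurable_prod _ fun i _ => (hf i).comp (measurable_pi_apply i)
    rw [← hmp.lintegral_comp hFmeas]
    have hcalc : ∀ y : ℝ × (Fin n → ℝ),
        (∏ i, f i (((MeasurableEquiv.piFinSuccAbove (fun _ => ℝ) 0).symm y) i))
          = f 0 y.1 * ∏ j, f (Fin.succ j) (y.2 j) := by
      intro y
      rw [Fin.prod_univ_succ]
      simp [MeasurableEquiv.piFinSuccAbove_symm_apply, Fin.insertNthEquiv,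
        Fin.insertNth_zero, Fin.zero_succAbove]
    simp_rw [hcalc]
    rw [lintegral_prod_mul (f := fun a => f 0 a) (g := fun v : Fin n → ℝ => ∏ j, f (Fin.succ j) (v j))
      ((hf 0).aemeasurable)
      ((Finset.measurable_prod _ fun j _ => (hf _).comp (measurable_pi_apply j)).aemeasurable)]
    rw [ih _ (fun i => hμ _) _ (fun j => hf _), Fin.prod_univ_succ]
    simp [Fin.zero_succAbove]

lemma gaussian_mgf_lintegral (c : ℝ) :
    ∫⁻ x, ENNReal.ofReal (Real.exp (c * x)) ∂(gaussianReal 0 1)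
      = ENNReal.ofReal (Real.exp (c ^ 2 / 2)) := by
  rw [gaussianReal_of_var_ne_zero 0 one_ne_zero]
  rw [lintegral_withDensity_eq_lintegral_mul _ (measurable_gaussianPDF 0 1)
    (g := fun x => ENNReal.ofReal (Real.exp (c * x))) (by fun_prop)]
  have h : ∀ x : ℝ, (gaussianPDF 0 1 x) * ENNReal.ofReal (Real.exp (c * x))
      = ENNReal.ofReal (Real.exp (c ^ 2 / 2)) * gaussianPDF c 1 x := by
    intro x
    rw [gaussianPDF_def, gaussianPDF_def, ← ENNReal.ofReal_mul (gaussianPDFReal_nonneg _ _ _),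
      ← ENNReal.ofReal_mul (Real.exp_nonneg _)]
    congr 1
    simp only [gaussianPDFReal]
    rw [mul_assoc, ← Real.exp_add, mul_left_comm, ← Real.exp_add]
    congr 2
    push_cast
    ring
  simp only [Pi.mul_apply, h]
  rw [lintegral_const_mul _ (measurable_gaussianPDF c 1), lintegral_gaussianPDF_eq_one c one_ne_zero,
    mul_one]

lemma gaussian_lin_tail {N : ℕ} (a : Fin N → ℝ) (σ2 s : ℝ) (hσ : 0 < σ2)
    (ha : ∑ i, a i ^ 2 ≤ σ2) (hs : 0 ≤ s) :
    (Measure.pi fun _ : Fin N => gaussianReal 0 1) {b | s ≤ ∑ i, a i * b i}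
      ≤ ENNReal.ofReal (Real.exp (-(s ^ 2 / (2 * σ2)))) := by
  set μ := (Measure.pi fun _ : Fin N => gaussianReal 0 1) with hμdef
  set lam := s / σ2 with hlam
  have hlam0 : 0 ≤ lam := div_nonneg hs hσ.le
  set g : (Fin N → ℝ) → ℝ≥0∞ :=
    fun b => ENNReal.ofReal (Real.exp (lam * ∑ i, a i * b i)) with hg
  have hgmeas : Measurable g := by fun_prop
  -- value of the exponential integral
  have hI : ∫⁻ b, g b ∂μ = ENNReal.ofReal (Real.exp (lam ^ 2 * (∑ i, a i ^ 2) / 2)) := by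
    have h1 : ∀ b : Fin N → ℝ, g b = ∏ i, ENNReal.ofReal (Real.exp ((lam * a i) * b i)) := by
      intro b
      show ENNReal.ofReal _ = _
      rw [← ENNReal.ofReal_prod_of_nonneg (fun i _ => (Real.exp_nonneg _)), ← Real.exp_sum]
      refine congrArg ENNReal.ofReal (congrArg Real.exp ?_)
      rw [Finset.mul_sum]
      exact Finset.sum_congr rfl fun i _ => (mul_assoc _ _ _).symm
    simp_rw [h1]
    rw [hμdef, lintegral_pi_prod (fun _ => gaussianReal 0 1) (fun i => inferInstance)
      (fun i y => ENNReal.ofReal (Real.exp ((lam * a i) * y))) (fun i => by fun_prop)]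
    simp_rw [gaussian_mgf_lintegral]
    rw [← ENNReal.ofReal_prod_of_nonneg (fun i _ => (Real.exp_nonneg _)), ← Real.exp_sum]
    refine congrArg ENNReal.ofReal (congrArg Real.exp ?_)
    rw [← Finset.sum_div, Finset.mul_sum]
    refine congrArg (fun z => z / 2) ?_
    exact Finset.sum_congr rfl fun i _ => mul_pow _ _ _
  set ε : ℝ≥0∞ := ENNReal.ofReal (Real.exp (lam * s)) with hε
  have hεpos : ε ≠ 0 := by
    simp [hε, ENNReal.ofReal_eq_zero, not_le, Real.exp_pos]
  have hεtop : ε ≠ ⊤ := ENNReal.ofReal_ne_top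
  have hsub : {b : Fin N → ℝ | s ≤ ∑ i, a i * b i} ⊆ {b | ε ≤ g b} := by
    intro b hb
    simp only [Set.mem_setOf_eq] at hb ⊢
    rw [hε, hg]
    exact ENNReal.ofReal_le_ofReal (Real.exp_le_exp.2 (mul_le_mul_of_nonneg_left hb hlam0))
  have hmarkov : ε * μ {b | ε ≤ g b} ≤ ∫⁻ b, g b ∂μ :=
    mul_meas_ge_le_lintegral₀ hgmeas.aemeasurable ε
  have h2 : μ {b : Fin N → ℝ | s ≤ ∑ i, a i * b i} ≤ ε⁻¹ * ∫⁻ b, g b ∂μ := by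
    calc μ {b : Fin N → ℝ | s ≤ ∑ i, a i * b i} ≤ μ {b | ε ≤ g b} := measure_mono hsub
    _ = ε⁻¹ * (ε * μ {b | ε ≤ g b}) := by
        rw [← mul_assoc, ENNReal.inv_mul_cancel hεpos hεtop, one_mul]
    _ ≤ ε⁻¹ * ∫⁻ b, g b ∂μ := mul_le_mul_right hmarkov _
  refine h2.trans ?_
  rw [hI, hε, ← ENNReal.ofReal_inv_of_pos (Real.exp_pos _), ← Real.exp_neg,
    ← ENNReal.ofReal_mul (Real.exp_nonneg _), ← Real.exp_add]
  apply ENNReal.ofReal_le_ofReal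
  apply Real.exp_le_exp.2
  have hstep : lam ^ 2 * (∑ i, a i ^ 2) / 2 ≤ lam ^ 2 * σ2 / 2 := by
    apply div_le_div_of_nonneg_right ?_ (by norm_num)
    exact mul_le_mul_of_nonneg_left ha (sq_nonneg _)
  have : -(lam * s) + lam ^ 2 * σ2 / 2 = -(s ^ 2 / (2 * σ2)) := by
    rw [hlam]; field_simp; ring
  linarith [hstep]

lemma trig_tail {ℓ : ℕ} (s : ℝ) (hs : 0 ≤ s) :
    (Measure.pi fun _ : Fin (ℓ + 1) => gaussianReal 0 1)
        {b : Fin (ℓ + 1) → ℝ | ∃ m ∈ Finset.range (2 * ℓ + 2), s ≤ ‖trigSum b m‖}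
      ≤ ((2 * ℓ + 2 : ℕ) : ℝ≥0∞) *
          (4 * ENNReal.ofReal (Real.exp (-((s / 2) ^ 2 / (2 * ((ℓ : ℝ) + 1)))))) := by
  set μ := (Measure.pi fun _ : Fin (ℓ + 1) => gaussianReal 0 1) with hμ
  set ω : ℂ := Complex.exp (2 * Real.pi * Complex.I / ((2 * ℓ + 2 : ℕ) : ℂ)) with hω
  have habs : ‖ω‖ = 1 := by
    rw [hω, show (2 * (Real.pi:ℂ) * Complex.I / ((2 * ℓ + 2 : ℕ) : ℂ))
        = ((2 * Real.pi / ((2 * ℓ + 2 : ℕ) : ℝ) : ℝ) : ℂ) * Complex.I by push_cast; ring]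
    exact Complex.norm_exp_ofReal_mul_I _
  have habspow : ∀ j : ℕ, ‖ω ^ j‖ = 1 := fun j => by rw [norm_pow, habs, one_pow]
  -- the four families of half-space events
  set SRe : ℕ → Set (Fin (ℓ + 1) → ℝ) :=
    fun m => {b | s / 2 ≤ ∑ k : Fin (ℓ + 1), (ω ^ ((k : ℕ) * m)).re * b k} with hSRe
  set SRe' : ℕ → Set (Fin (ℓ + 1) → ℝ) :=
    fun m => {b | s / 2 ≤ ∑ k : Fin (ℓ + 1), -(ω ^ ((k : ℕ) * m)).re * b k} with hSRe'
  set SIm : ℕ → Set (Fin (ℓ + 1) → ℝ) :=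
    fun m => {b | s / 2 ≤ ∑ k : Fin (ℓ + 1), (ω ^ ((k : ℕ) * m)).im * b k} with hSIm
  set SIm' : ℕ → Set (Fin (ℓ + 1) → ℝ) :=
    fun m => {b | s / 2 ≤ ∑ k : Fin (ℓ + 1), -(ω ^ ((k : ℕ) * m)).im * b k} with hSIm'
  -- real and imaginary parts of the trigonometric sums
  have hre : ∀ (b : Fin (ℓ + 1) → ℝ) (m : ℕ),
      (trigSum b m).re = ∑ k : Fin (ℓ + 1), (ω ^ ((k : ℕ) * m)).re * b k := by
    intro b m
    unfold trigSum
    rw [← hω, Complex.re_sum]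
    refine Finset.sum_congr rfl fun k _ => ?_
    rw [Complex.mul_re]
    simp [mul_comm]
  have him : ∀ (b : Fin (ℓ + 1) → ℝ) (m : ℕ),
      (trigSum b m).im = ∑ k : Fin (ℓ + 1), (ω ^ ((k : ℕ) * m)).im * b k := by
    intro b m
    unfold trigSum
    rw [← hω, Complex.im_sum]
    refine Finset.sum_congr rfl fun k _ => ?_
    rw [Complex.mul_im]
    simp [mul_comm]
  -- inclusion into the union
  have hincl : {b : Fin (ℓ + 1) → ℝ | ∃ m ∈ Finset.range (2 * ℓ + 2), s ≤ ‖trigSum b m‖}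
      ⊆ ⋃ m ∈ Finset.range (2 * ℓ + 2), (SRe m ∪ SRe' m ∪ SIm m ∪ SIm' m) := by
    rintro b ⟨m, hm, hab⟩
    refine Set.mem_biUnion hm ?_
    have h1 : s ≤ |(trigSum b m).re| + |(trigSum b m).im| :=
      hab.trans (Complex.norm_le_abs_re_add_abs_im _)
    by_cases h2 : s / 2 ≤ |(trigSum b m).re|
    · rcases le_abs.1 h2 with h3 | h3
      · exact Or.inl (Or.inl (Or.inl (by rw [hSRe]; exact Set.mem_setOf_eq ▸ (hre b m ▸ h3))))
      · refine Or.inl (Or.inl (Or.inr ?_))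
        rw [hSRe']
        show s / 2 ≤ ∑ k : Fin (ℓ + 1), -(ω ^ ((k : ℕ) * m)).re * b k
        have : ∑ k : Fin (ℓ + 1), -(ω ^ ((k : ℕ) * m)).re * b k = -(trigSum b m).re := by
          rw [hre b m, ← Finset.sum_neg_distrib]
          exact Finset.sum_congr rfl fun k _ => by ring
        rw [this]
        exact h3
    · have h2' : s / 2 ≤ |(trigSum b m).im| := by linarith [abs_nonneg (trigSum b m).re]
      rcases le_abs.1 h2' with h3 | h3
      · exact Or.inl (Or.inr (by rw [hSIm]; exact Set.mem_setOf_eq ▸ (him b m ▸ h3)))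
      · refine Or.inr ?_
        rw [hSIm']
        show s / 2 ≤ ∑ k : Fin (ℓ + 1), -(ω ^ ((k : ℕ) * m)).im * b k
        have : ∑ k : Fin (ℓ + 1), -(ω ^ ((k : ℕ) * m)).im * b k = -(trigSum b m).im := by
          rw [him b m, ← Finset.sum_neg_distrib]
          exact Finset.sum_congr rfl fun k _ => by ring
        rw [this]
        exact h3
  -- coefficient bounds
  have hcoef : ∀ (w : Fin (ℓ + 1) → ℝ), (∀ k, |w k| ≤ 1) → ∑ k : Fin (ℓ + 1), (w k) ^ 2 ≤ ((ℓ : ℝ) + 1) := by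
    intro w hw
    calc ∑ k : Fin (ℓ + 1), (w k) ^ 2 ≤ ∑ _k : Fin (ℓ + 1), (1 : ℝ) := by
          refine Finset.sum_le_sum fun k _ => ?_
          calc (w k) ^ 2 = |w k| ^ 2 := (sq_abs _).symm
            _ ≤ 1 ^ 2 := by
                apply pow_le_pow_left₀ (abs_nonneg _) (hw k)
            _ = 1 := one_pow 2
      _ = ((ℓ : ℝ) + 1) := by simp
  have hσ : (0 : ℝ) < (ℓ : ℝ) + 1 := by positivity
  have htail : ∀ (w : Fin (ℓ + 1) → ℝ), (∀ k, |w k| ≤ 1) →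
      μ {b | s / 2 ≤ ∑ k : Fin (ℓ + 1), w k * b k}
        ≤ ENNReal.ofReal (Real.exp (-((s / 2) ^ 2 / (2 * ((ℓ : ℝ) + 1))))) := by
    intro w hw
    exact gaussian_lin_tail w ((ℓ : ℝ) + 1) (s / 2) hσ (hcoef w hw) (by linarith)
  -- assemble
  calc μ {b : Fin (ℓ + 1) → ℝ | ∃ m ∈ Finset.range (2 * ℓ + 2), s ≤ ‖trigSum b m‖}
      ≤ μ (⋃ m ∈ Finset.range (2 * ℓ + 2), (SRe m ∪ SRe' m ∪ SIm m ∪ SIm' m)) :=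
        measure_mono hincl
    _ ≤ ∑ m ∈ Finset.range (2 * ℓ + 2), μ (SRe m ∪ SRe' m ∪ SIm m ∪ SIm' m) :=
        measure_biUnion_finset_le _ _
    _ ≤ ∑ _m ∈ Finset.range (2 * ℓ + 2),
          (4 : ℝ≥0∞) * ENNReal.ofReal (Real.exp (-((s / 2) ^ 2 / (2 * ((ℓ : ℝ) + 1))))) := by
        refine Finset.sum_le_sum fun m _ => ?_
        have e1 := htail (fun k => (ω ^ ((k : ℕ) * m)).re) (fun k => by
          have := Complex.abs_re_le_norm (ω ^ ((k : ℕ) * m)); rwa [habspow] at this)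
        have e2 := htail (fun k => -(ω ^ ((k : ℕ) * m)).re) (fun k => by
          rw [abs_neg]
          have := Complex.abs_re_le_norm (ω ^ ((k : ℕ) * m)); rwa [habspow] at this)
        have e3 := htail (fun k => (ω ^ ((k : ℕ) * m)).im) (fun k => by
          have := Complex.abs_im_le_norm (ω ^ ((k : ℕ) * m)); rwa [habspow] at this)
        have e4 := htail (fun k => -(ω ^ ((k : ℕ) * m)).im) (fun k => by
          rw [abs_neg]
          have := Complex.abs_im_le_norm (ω ^ ((k : ℕ) * m)); rwa [habspow] at this)
        calc μ (SRe m ∪ SRe' m ∪ SIm m ∪ SIm' m)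
            ≤ μ (SRe m ∪ SRe' m ∪ SIm m) + μ (SIm' m) := measure_union_le _ _
          _ ≤ (μ (SRe m ∪ SRe' m) + μ (SIm m)) + μ (SIm' m) :=
              add_le_add (measure_union_le _ _) le_rfl
          _ ≤ ((μ (SRe m) + μ (SRe' m)) + μ (SIm m)) + μ (SIm' m) :=
              add_le_add (add_le_add (measure_union_le _ _) le_rfl) le_rfl
          _ ≤ (4 : ℝ≥0∞) * ENNReal.ofReal (Real.exp (-((s / 2) ^ 2 / (2 * ((ℓ : ℝ) + 1))))) := by
              have := add_le_add (add_le_add (add_le_add e1 e2) e3) e4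
              refine this.trans ?_
              ring_nf
              rfl
    _ = ((2 * ℓ + 2 : ℕ) : ℝ≥0∞) *
          (4 * ENNReal.ofReal (Real.exp (-((s / 2) ^ 2 / (2 * ((ℓ : ℝ) + 1)))))) := by
        rw [Finset.sum_const, Finset.card_range, nsmul_eq_mul]

lemma numeric_bound (ℓ : ℕ) (t : ℝ) (ht : 16 ≤ t) :
    (2 * (ℓ : ℝ) + 2) * (4 * Real.exp (-(t ^ 2 * (((max ℓ 1 : ℕ) : ℝ) *
        Real.log ((max ℓ 2 : ℕ) : ℝ)) / (8 * ((ℓ : ℝ) + 1)))))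
      ≤ Real.exp (-(Real.log 2 / 32 * t ^ 2)) := by
  set K : ℝ := ((max ℓ 2 : ℕ) : ℝ) with hKdef
  set M : ℝ := ((max ℓ 1 : ℕ) : ℝ) with hMdef
  set L : ℝ := Real.log K with hLdef
  have hK2 : (2 : ℝ) ≤ K := by
    rw [hKdef]; exact_mod_cast Nat.le_max_right ℓ 2
  have hKl : (ℓ : ℝ) ≤ K := by
    rw [hKdef]; exact_mod_cast Nat.le_max_left ℓ 2
  have hL2 : Real.log 2 ≤ L := Real.log_le_log (by norm_num) hK2
  have hlog2 : 0 < Real.log 2 := Real.log_pos (by norm_num)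
  have hL0 : 0 < L := lt_of_lt_of_le hlog2 hL2
  have hM : (ℓ : ℝ) + 1 ≤ 2 * M := by
    rw [hMdef]
    have h1 := Nat.le_max_left ℓ 1
    have h2 := Nat.le_max_right ℓ 1
    have : (ℓ : ℕ) + 1 ≤ 2 * max ℓ 1 := by omega
    exact_mod_cast this
  have ht0 : (0:ℝ) < t := lt_of_lt_of_le (by norm_num) ht
  have ht2 : (256:ℝ) ≤ t ^ 2 := by nlinarith
  -- exponent comparison
  have expA : t ^ 2 * L / 16 ≤ t ^ 2 * (M * L) / (8 * ((ℓ : ℝ) + 1)) := by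
    rw [div_le_div_iff₀ (by norm_num) (by positivity)]
    nlinarith [mul_le_mul_of_nonneg_left hM (show (0:ℝ) ≤ 8 * t ^ 2 * L by positivity)]
  have hE : Real.exp (-(t ^ 2 * (M * L) / (8 * ((ℓ : ℝ) + 1)))) ≤ Real.exp (-(t ^ 2 * L / 16)) :=
    Real.exp_le_exp.2 (by linarith)
  -- counting factor
  have h16 : (2 : ℝ)^4 ≤ K ^ 4 := pow_le_pow_left₀ (by norm_num) hK2 4
  have hK5 : (2 * (ℓ : ℝ) + 2) * 4 ≤ K ^ 5 := by nlinarith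
  have hK5' : K ^ 5 = Real.exp (5 * L) := by
    have hKpos : (0:ℝ) < K := by linarith
    have h5 : K ^ 5 = Real.exp L ^ 5 := by rw [Real.exp_log hKpos]
    rw [h5, ← Real.exp_nat_mul]
    norm_num
  calc (2 * (ℓ : ℝ) + 2) * (4 * Real.exp (-(t ^ 2 * (M * L) / (8 * ((ℓ : ℝ) + 1)))))
      = ((2 * (ℓ : ℝ) + 2) * 4) * Real.exp (-(t ^ 2 * (M * L) / (8 * ((ℓ : ℝ) + 1)))) := by ring
    _ ≤ K ^ 5 * Real.exp (-(t ^ 2 * L / 16)) :=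
        mul_le_mul hK5 hE (Real.exp_nonneg _) (by positivity)
    _ = Real.exp (5 * L - t ^ 2 * L / 16) := by rw [hK5', ← Real.exp_add]; ring_nf
    _ ≤ Real.exp (-(Real.log 2 / 32 * t ^ 2)) := by
        apply Real.exp_le_exp.2
        nlinarith [mul_nonneg hL0.le (show (0:ℝ) ≤ t ^ 2 / 32 - 5 by linarith),
          mul_nonneg (show (0:ℝ) ≤ t ^ 2 / 32 by positivity) (sub_nonneg.2 hL2)]


/-- Concentration of the operator norm of a Gaussian lower triangular Toeplitz matrix:
there are universal `β₀, c₀ > 0` such that for every `ℓ` and every `t ≥ β₀`, if the first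
column is a standard Gaussian vector then
`P(‖B^ℓ‖_op > t (max(ℓ,1) log(max(ℓ,2)))^{1/2}) ≤ exp(−c₀ t²)`. -/
theorem gaussian_toeplitz_opNorm_concentration :
    ∃ β₀ c₀ : ℝ, 0 < β₀ ∧ 0 < c₀ ∧ ∀ ℓ : ℕ, ∀ t : ℝ, β₀ ≤ t →
      (Measure.pi fun _ : Fin (ℓ + 1) => gaussianReal 0 1)
          {b | t * Real.sqrt (((max ℓ 1 : ℕ) : ℝ) * Real.log ((max ℓ 2 : ℕ) : ℝ))
                < matOpNorm (toepOfVec b)}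
        ≤ ENNReal.ofReal (Real.exp (-(c₀ * t ^ 2))) := by
  refine ⟨16, Real.log 2 / 32, by norm_num,
    div_pos (Real.log_pos (by norm_num)) (by norm_num), ?_⟩
  intro ℓ t ht
  have ht0 : (0:ℝ) < t := lt_of_lt_of_le (by norm_num) ht
  set M : ℝ := ((max ℓ 1 : ℕ) : ℝ) with hM
  set L : ℝ := Real.log ((max ℓ 2 : ℕ) : ℝ) with hL
  set s : ℝ := t * Real.sqrt (M * L) with hs
  have hL0 : 0 ≤ L := by
    rw [hL]
    apply Real.log_nonneg
    have : (1:ℕ) ≤ max ℓ 2 := le_trans (by norm_num) (Nat.le_max_right ℓ 2)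
    exact_mod_cast this
  have hM0 : 0 ≤ M := by positivity
  have hML : 0 ≤ M * L := mul_nonneg hM0 hL0
  have hs0 : 0 ≤ s := mul_nonneg ht0.le (Real.sqrt_nonneg _)
  have hs2 : s ^ 2 = t ^ 2 * (M * L) := by
    rw [hs, mul_pow, Real.sq_sqrt hML]
  -- inclusion into the trigonometric-sum event
  have hincl : {b : Fin (ℓ + 1) → ℝ | s < matOpNorm (toepOfVec b)}
      ⊆ {b : Fin (ℓ + 1) → ℝ | ∃ m ∈ Finset.range (2 * ℓ + 2), s ≤ ‖trigSum b m‖} := by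
    intro b hb
    simp only [Set.mem_setOf_eq] at hb ⊢
    by_contra hcon
    push_neg at hcon
    exact absurd (matOpNorm_toep_le b s hs0 fun m hm => (hcon m hm).le) (not_le.2 hb)
  refine (measure_mono hincl).trans ((trig_tail s hs0).trans ?_)
  -- numeric estimate
  have hexp : (s / 2) ^ 2 / (2 * ((ℓ : ℝ) + 1)) = t ^ 2 * (M * L) / (8 * ((ℓ : ℝ) + 1)) := by
    have h1 : ((ℓ:ℝ) + 1) ≠ 0 := by positivity
    rw [div_pow, hs2]
    field_simp
    ring
  rw [hexp]
  have hcast : ((2 * ℓ + 2 : ℕ) : ℝ≥0∞) = ENNReal.ofReal ((2 * ℓ + 2 : ℕ) : ℝ) :=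
    (ENNReal.ofReal_natCast _).symm
  rw [hcast, show ((4:ℝ≥0∞)) = ENNReal.ofReal (4:ℝ) by norm_num,
    ← ENNReal.ofReal_mul (by norm_num), ← ENNReal.ofReal_mul (by positivity)]
  apply ENNReal.ofReal_le_ofReal
  have hnum := numeric_bound ℓ t ht
  have hc : ((2 * ℓ + 2 : ℕ) : ℝ) = 2 * (ℓ : ℝ) + 2 := by push_cast; ring
  rw [hc]
  exact hnum
end

section
/- There exists a universal constant C > 0 such that for every integer ℓ ≥ 2, if b_0, …, b_ℓ are independent standard Gaussian real random variables, then E[ sup_{x ∈ [0,1]} | Σ_{k=0}^{ℓ} b_k e^{2πi k x} | ] ≤ C (ℓ log ℓ)^{1/2}, where the sum is a complex number and |·| is its modulus. -/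
open MeasureTheory ProbabilityTheory Real

open scoped NNReal ENNReal

section GaussHelpers

lemma GTP.pdf_mul_exp (c x : ℝ) :
    gaussianPDFReal 0 1 x * Real.exp (c * x)
      = Real.exp (c ^ 2 / 2) * gaussianPDFReal c 1 x := by
  simp only [gaussianPDFReal, NNReal.coe_one, mul_one, sub_zero]
  have h : Real.exp (-x ^ 2 / 2 + c * x) = Real.exp (c ^ 2 / 2 + -(x - c) ^ 2 / 2) := by
    ring_nf
  rw [mul_assoc, ← Real.exp_add, h, Real.exp_add]
  ring

lemma GTP.gaussianReal_int (f : ℝ → ℝ) :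
    (∫ x, f x ∂(gaussianReal 0 1)) = ∫ x, gaussianPDFReal 0 1 x * f x := by
  rw [gaussianReal_of_var_ne_zero 0 one_ne_zero]
  have h : (gaussianPDF 0 1) = fun x => ((Real.toNNReal (gaussianPDFReal 0 1 x) : ℝ≥0) : ℝ≥0∞) := by
    ext x; rfl
  rw [h, integral_withDensity_eq_integral_smul
    ((measurable_gaussianPDFReal 0 1).real_toNNReal)]
  congr 1 with x
  simp [NNReal.smul_def, Real.coe_toNNReal _ (gaussianPDFReal_nonneg 0 1 x)]

lemma GTP.integrable_exp_gauss (c : ℝ) :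
    Integrable (fun x => Real.exp (c * x)) (gaussianReal 0 1) := by
  rw [gaussianReal_of_var_ne_zero 0 one_ne_zero]
  have h : (gaussianPDF 0 1) = fun x => ((Real.toNNReal (gaussianPDFReal 0 1 x) : ℝ≥0) : ℝ≥0∞) := by
    ext x; rfl
  rw [h, integrable_withDensity_iff_integrable_smul
    ((measurable_gaussianPDFReal 0 1).real_toNNReal)]
  have h2 : (fun x => (Real.toNNReal (gaussianPDFReal 0 1 x) : ℝ≥0) • Real.exp (c * x))
      = fun x => Real.exp (c ^ 2 / 2) * gaussianPDFReal c 1 x := by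
    ext x
    rw [NNReal.smul_def, Real.coe_toNNReal _ (gaussianPDFReal_nonneg 0 1 x), smul_eq_mul,
      GTP.pdf_mul_exp]
  rw [h2]
  exact (integrable_gaussianPDFReal c 1).const_mul _

lemma GTP.integral_exp_gauss (c : ℝ) :
    (∫ x, Real.exp (c * x) ∂(gaussianReal 0 1)) = Real.exp (c ^ 2 / 2) := by
  rw [GTP.gaussianReal_int]
  simp_rw [GTP.pdf_mul_exp]
  rw [integral_const_mul, integral_gaussianPDFReal_eq_one c one_ne_zero, mul_one]

lemma GTP.integrable_prod_pi : ∀ (n : ℕ) (f : Fin n → ℝ → ℝ),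
    (∀ i, Integrable (f i) (gaussianReal 0 1)) →
    Integrable (fun b : Fin n → ℝ => ∏ i, f i (b i))
      (Measure.pi fun _ => gaussianReal 0 1) := by
  intro n
  induction n with
  | zero => intro f hf
            simp only [Finset.univ_eq_empty, Finset.prod_empty]
            exact integrable_const 1
  | succ n n_ih =>
      intro f hf
      have := ((measurePreserving_piFinSuccAbove
        (fun _ : Fin (n+1) => gaussianReal 0 1) 0).symm)
      rw [← this.integrable_comp_emb (MeasurableEquiv.measurableEmbedding _)]
      simp_rw [MeasurableEquiv.piFinSuccAbove_symm_apply, Fin.insertNthEquiv,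
        Fin.prod_univ_succ, Fin.insertNth_zero]
      simp only [Fin.zero_succAbove, Function.comp_def, Fin.cons_zero, Fin.cons_succ]
      have h2 : Integrable (fun (x : Fin n → ℝ) ↦ ∏ j, f (Fin.succ j) (x j))
          (Measure.pi fun _ => gaussianReal 0 1) :=
        n_ih (fun i => f (Fin.succ i)) (fun i => hf _)
      exact Integrable.mul_prod (hf 0) h2

lemma GTP.integral_prod_pi : ∀ (n : ℕ) (f : Fin n → ℝ → ℝ),
    (∫ b, ∏ i, f i (b i) ∂(Measure.pi fun _ : Fin n => gaussianReal 0 1))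
      = ∏ i, ∫ x, f i x ∂(gaussianReal 0 1) := by
  intro n
  induction n with
  | zero => simp
  | succ n n_ih =>
      intro f
      calc
        _ = ∫ x : ℝ × (Fin n → ℝ),
            f 0 x.1 * ∏ i : Fin n, f (Fin.succ i) (x.2 i)
              ∂((gaussianReal 0 1).prod (Measure.pi fun _ => gaussianReal 0 1)) := by
          rw [← ((measurePreserving_piFinSuccAbove
            (fun _ : Fin (n+1) => gaussianReal 0 1) 0).symm).integral_comp']
          congr 1 with x
          simp [Fin.prod_univ_succ, MeasurableEquiv.piFinSuccAbove_symm_apply,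
            Fin.insertNthEquiv, Fin.insertNth_zero, Fin.zero_succAbove]
        _ = (∫ x, f 0 x ∂(gaussianReal 0 1))
              * ∏ i : Fin n, ∫ x, f (Fin.succ i) x ∂(gaussianReal 0 1) := by
          rw [← n_ih fun i => f (Fin.succ i), ← integral_prod_mul]
        _ = ∏ i, ∫ x, f i x ∂(gaussianReal 0 1) := by rw [Fin.prod_univ_succ]

lemma GTP.integrable_exp_lin (n : ℕ) (c : Fin n → ℝ) :
    Integrable (fun b : Fin n → ℝ => Real.exp (∑ i, c i * b i))
      (Measure.pi fun _ => gaussianReal 0 1) := by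
  have h : (fun b : Fin n → ℝ => Real.exp (∑ i, c i * b i))
      = fun b => ∏ i, Real.exp (c i * b i) := by
    ext b; rw [Real.exp_sum]
  rw [h]
  exact GTP.integrable_prod_pi n _ (fun i => GTP.integrable_exp_gauss (c i))

lemma GTP.integral_exp_lin (n : ℕ) (c : Fin n → ℝ) :
    (∫ b, Real.exp (∑ i, c i * b i) ∂(Measure.pi fun _ : Fin n => gaussianReal 0 1))
      = Real.exp ((∑ i, c i ^ 2) / 2) := by
  have h : (fun b : Fin n → ℝ => Real.exp (∑ i, c i * b i))
      = fun b => ∏ i, Real.exp (c i * b i) := by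
    ext b; rw [Real.exp_sum]
  rw [h, GTP.integral_prod_pi n (fun i x => Real.exp (c i * x))]
  simp_rw [GTP.integral_exp_gauss]
  rw [← Real.exp_sum, Finset.sum_div]

lemma GTP.circle_lip (t s : ℝ) :
    (norm : ℂ → ℝ) (Complex.exp ((t : ℂ) * Complex.I) - Complex.exp ((s : ℂ) * Complex.I))
      ≤ |t - s| := by
  have h1 : Complex.exp ((t : ℂ) * Complex.I) - Complex.exp ((s : ℂ) * Complex.I)
      = Complex.exp ((s : ℂ) * Complex.I) * (Complex.exp (((t - s : ℝ) : ℂ) * Complex.I) - 1) := by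
    rw [mul_sub, ← Complex.exp_add, mul_one]
    push_cast
    ring_nf
  rw [h1, norm_mul, Complex.norm_exp_ofReal_mul_I, one_mul]
  set u := t - s
  have key : (norm : ℂ → ℝ) (Complex.exp ((u : ℂ) * Complex.I) - 1) ^ 2 ≤ |u| ^ 2 := by
    rw [← Complex.normSq_eq_norm_sq]
    have hre : (Complex.exp ((u : ℂ) * Complex.I) - 1).re = Real.cos u - 1 := by
      simp [Complex.exp_ofReal_mul_I_re]
    have him : (Complex.exp ((u : ℂ) * Complex.I) - 1).im = Real.sin u := by
      simp [Complex.exp_ofReal_mul_I_im]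
    rw [Complex.normSq_apply, hre, him]
    have h2 : (Real.cos u - 1) ^ 2 + Real.sin u ^ 2 = 2 * (1 - Real.cos u) := by
      have := Real.sin_sq_add_cos_sq u
      nlinarith
    have h3 : 1 - Real.cos u = 2 * Real.sin (u / 2) ^ 2 := by
      have hu : u = 2 * (u / 2) := by ring
      have hc := Real.cos_two_mul (u / 2)
      rw [← hu] at hc
      have hs := Real.sin_sq_add_cos_sq (u / 2)
      nlinarith [hc, hs]
    have h4 : Real.sin (u / 2) ^ 2 ≤ (u / 2) ^ 2 := by
      have := Real.abs_sin_le_abs (x := u / 2)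
      nlinarith [abs_nonneg (u / 2), abs_nonneg (Real.sin (u / 2)), sq_abs (u / 2),
        sq_abs (Real.sin (u / 2))]
    have hsq : (Real.cos u - 1) * (Real.cos u - 1) + Real.sin u * Real.sin u
        = (Real.cos u - 1) ^ 2 + Real.sin u ^ 2 := by ring
    rw [hsq, h2, h3]
    have hq : (u / 2) ^ 2 = u ^ 2 / 4 := by ring
    rw [hq] at h4
    rw [sq_abs]
    linarith
  calc (norm : ℂ → ℝ) (Complex.exp ((u : ℂ) * Complex.I) - 1)
      = √((norm : ℂ → ℝ) (Complex.exp ((u : ℂ) * Complex.I) - 1) ^ 2) := by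
        rw [Real.sqrt_sq (norm_nonneg _)]
    _ ≤ √(|u| ^ 2) := Real.sqrt_le_sqrt key
    _ = |u| := Real.sqrt_sq (abs_nonneg _)

lemma GTP.le_exp_self (u : ℝ) : u ≤ Real.exp u := by
  have := Real.add_one_le_exp u
  linarith

lemma GTP.abs_le_exp_add (u : ℝ) : |u| ≤ Real.exp u + Real.exp (-u) := by
  rcases abs_cases u with ⟨h, _⟩ | ⟨h, _⟩
  · rw [h]
    have := GTP.le_exp_self u
    have := Real.exp_pos (-u)
    linarith
  · rw [h]
    have := GTP.le_exp_self (-u)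
    have := Real.exp_pos u
    linarith

lemma GTP.abs_le_exp_bound (lam aa u : ℝ) (hlam : 0 < lam) :
    |u| ≤ aa + (Real.exp (-(lam * aa)) / lam) * (Real.exp (lam * u) + Real.exp (-(lam * u))) := by
  have h1 : lam * (|u| - aa) ≤ Real.exp (lam * (|u| - aa)) := GTP.le_exp_self _
  have h2 : Real.exp (lam * (|u| - aa)) = Real.exp (-(lam * aa)) * Real.exp (lam * |u|) := by
    rw [← Real.exp_add]; ring_nf
  have h3 : Real.exp (lam * |u|) ≤ Real.exp (lam * u) + Real.exp (-(lam * u)) := by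
    rcases abs_cases u with ⟨h, _⟩ | ⟨h, _⟩
    · rw [h]
      have := Real.exp_pos (-(lam * u))
      linarith
    · rw [h, mul_neg]
      have := Real.exp_pos (lam * u)
      linarith
  have h4 : Real.exp (-(lam * aa)) * Real.exp (lam * |u|)
      ≤ Real.exp (-(lam * aa)) * (Real.exp (lam * u) + Real.exp (-(lam * u))) :=
    mul_le_mul_of_nonneg_left h3 (Real.exp_pos _).le
  have h5 : lam * (|u| - aa) ≤ Real.exp (-(lam * aa)) * (Real.exp (lam * u) + Real.exp (-(lam * u))) := by
    linarith
  have h6 : |u| - aa ≤ Real.exp (-(lam * aa)) * (Real.exp (lam * u) + Real.exp (-(lam * u))) / lam := by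
    rw [le_div_iff₀ hlam]
    linarith [h5]
  have h7 : Real.exp (-(lam * aa)) * (Real.exp (lam * u) + Real.exp (-(lam * u))) / lam
      = Real.exp (-(lam * aa)) / lam * (Real.exp (lam * u) + Real.exp (-(lam * u))) := by
    ring
  linarith

end GaussHelpers

noncomputable def GTP.thf (N : ℕ) (j : Fin N) (k : ℕ) : ℝ := 2 * π * k * ((j : ℝ) / (N : ℝ))

noncomputable def GTP.Rf (n N : ℕ) (j : Fin N) (b : Fin n → ℝ) : ℝ :=
  ∑ k : Fin n, Real.cos (GTP.thf N j (k : ℕ)) * b k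

noncomputable def GTP.If (n N : ℕ) (j : Fin N) (b : Fin n → ℝ) : ℝ :=
  ∑ k : Fin n, Real.sin (GTP.thf N j (k : ℕ)) * b k

noncomputable def GTP.Tf (n N : ℕ) (lam : ℝ) (b : Fin n → ℝ) : ℝ :=
  ∑ j : Fin N, (Real.exp (lam * GTP.Rf n N j b) + Real.exp (-(lam * GTP.Rf n N j b))
    + Real.exp (lam * GTP.If n N j b) + Real.exp (-(lam * GTP.If n N j b)))

noncomputable def GTP.gf (ℓ N : ℕ) (lam aa : ℝ) (b : Fin (ℓ + 1) → ℝ) : ℝ :=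
  2 * aa + Real.exp (-(lam * aa)) / lam * (2 * GTP.Tf (ℓ + 1) N lam b)
    + 2 * π * ℓ / (N : ℝ) * ∑ k, (Real.exp (b k) + Real.exp (-(b k)))

lemma GTP.net (N : ℕ) (hN : 0 < N) (x : ℝ) (hx0 : 0 ≤ x) (hx1 : x ≤ 1) :
    ∃ j : Fin N, |x - (j : ℝ) / (N : ℝ)| ≤ 1 / (N : ℝ) := by
  have hNr : (0:ℝ) < N := by exact_mod_cast hN
  set m : ℕ := min (⌊x * N⌋).toNat (N - 1) with hm
  have hmN : m < N := lt_of_le_of_lt (min_le_right _ _) (Nat.sub_lt hN one_pos)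
  refine ⟨⟨m, hmN⟩, ?_⟩
  have hfl0 : (0:ℤ) ≤ ⌊x * N⌋ := Int.floor_nonneg.mpr (by positivity)
  have hcast : ((⌊x * N⌋).toNat : ℝ) = ((⌊x * N⌋ : ℤ) : ℝ) := by
    exact_mod_cast congrArg (fun z : ℤ => (z : ℝ)) (Int.toNat_of_nonneg hfl0)
  have key1 : (m:ℝ) ≤ x * N ∧ x * N ≤ (m:ℝ) + 1 := by
    rcases le_or_gt (⌊x * N⌋).toNat (N - 1) with h | h
    · have hmm : m = (⌊x * N⌋).toNat := min_eq_left h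
      constructor
      · rw [hmm, hcast]; exact Int.floor_le _
      · rw [hmm, hcast]; exact (Int.lt_floor_add_one _).le
    · have hmm : m = N - 1 := min_eq_right h.le
      have hle : (N:ℝ) ≤ ((⌊x * N⌋).toNat : ℝ) := by
        exact_mod_cast Nat.le_of_pred_lt h
      have h1 : (N:ℝ) ≤ x * N := le_trans hle (by rw [hcast]; exact Int.floor_le _)
      have hm1 : (m:ℝ) = (N:ℝ) - 1 := by
        rw [hmm]
        push_cast [Nat.cast_sub hN]
        ring
      constructor
      · rw [hm1]; linarith
      · rw [hm1]
        have : x * N ≤ 1 * N := mul_le_mul_of_nonneg_right hx1 hNr.le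
        linarith
  obtain ⟨k1, k2⟩ := key1
  rw [abs_le]
  constructor
  · have h1 : (m:ℝ) / N ≤ x := (div_le_iff₀ hNr).mpr k1
    have h1N : 0 < 1 / (N:ℝ) := by positivity
    simp only [Fin.val_mk]
    linarith
  · have h2 : x ≤ ((m:ℝ) + 1) / N := (le_div_iff₀ hNr).mpr k2
    have h3 : ((m:ℝ) + 1) / N = (m:ℝ) / N + 1 / N := by ring
    simp only [Fin.val_mk]
    linarith

lemma GTP.pointwise (ℓ N : ℕ) (hN : 0 < N) (lam aa : ℝ) (hlam : 0 < lam)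
    (b : Fin (ℓ + 1) → ℝ) (x : ℝ) (hx0 : 0 ≤ x) (hx1 : x ≤ 1) :
    (norm : ℂ → ℝ) (∑ k : Fin (ℓ + 1),
        (b k : ℂ) * Complex.exp (2 * Real.pi * Complex.I * (k : ℕ) * (x : ℝ)))
      ≤ GTP.gf ℓ N lam aa b := by
  have hNr : (0:ℝ) < N := by exact_mod_cast hN
  obtain ⟨j, hj⟩ := GTP.net N hN x hx0 hx1
  set y : ℝ := (j : ℝ) / (N : ℝ) with hy
  set P : ℝ → ℂ := fun z =>
    ∑ k : Fin (ℓ + 1), (b k : ℂ) * Complex.exp (((2 * π * k * z : ℝ) : ℂ) * Complex.I) with hP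
  have hform : (∑ k : Fin (ℓ + 1),
      (b k : ℂ) * Complex.exp (2 * Real.pi * Complex.I * (k : ℕ) * (x : ℝ))) = P x := by
    rw [hP]
    refine Finset.sum_congr rfl fun k _ => ?_
    congr 1
    congr 1
    push_cast
    ring
  rw [hform]
  have tri : (norm : ℂ → ℝ) (P x) ≤ (norm : ℂ → ℝ) (P y) + (norm : ℂ → ℝ) (P x - P y) := by
    have h := norm_add_le (P y) (P x - P y)
    simpa using h
  -- Lipschitz part
  have hlip : (norm : ℂ → ℝ) (P x - P y)
      ≤ 2 * π * ℓ / (N : ℝ) * ∑ k : Fin (ℓ + 1), |b k| := by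
    have hdiff : P x - P y = ∑ k : Fin (ℓ + 1), (b k : ℂ) *
        (Complex.exp (((2 * π * k * x : ℝ) : ℂ) * Complex.I)
          - Complex.exp (((2 * π * k * y : ℝ) : ℂ) * Complex.I)) := by
      rw [hP, ← Finset.sum_sub_distrib]
      refine Finset.sum_congr rfl fun k _ => ?_
      ring
    rw [hdiff]
    refine (norm_sum_le _ _).trans ?_
    have hterm : ∀ k : Fin (ℓ + 1),
        (norm : ℂ → ℝ) ((b k : ℂ) * (Complex.exp (((2 * π * k * x : ℝ) : ℂ) * Complex.I)
          - Complex.exp (((2 * π * k * y : ℝ) : ℂ) * Complex.I)))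
        ≤ |b k| * (2 * π * ℓ / (N : ℝ)) := by
      intro k
      rw [norm_mul, Complex.norm_real, Real.norm_eq_abs]
      refine mul_le_mul_of_nonneg_left ?_ (abs_nonneg _)
      refine (GTP.circle_lip _ _).trans ?_
      have h1 : 2 * π * k * x - 2 * π * k * y = 2 * π * k * (x - y) := by ring
      rw [h1, abs_mul]
      have h2 : |2 * π * (k : ℝ)| = 2 * π * k := by
        rw [abs_of_nonneg]
        positivity
      rw [h2]
      have hk : (k : ℝ) ≤ ℓ := by
        have := Nat.lt_succ_iff.mp k.isLt
        exact_mod_cast this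
      have h3 : |x - y| ≤ 1 / (N:ℝ) := hj
      calc 2 * π * (k:ℝ) * |x - y| ≤ 2 * π * (ℓ:ℝ) * (1 / (N:ℝ)) := by
            apply mul_le_mul (by nlinarith [Real.pi_pos]) h3 (abs_nonneg _) (by positivity)
        _ = 2 * π * ℓ / (N : ℝ) := by ring
    calc ∑ k : Fin (ℓ + 1), (norm : ℂ → ℝ) _ ≤ ∑ k : Fin (ℓ + 1), |b k| * (2 * π * ℓ / (N : ℝ)) :=
          Finset.sum_le_sum fun k _ => hterm k
      _ = 2 * π * ℓ / (N : ℝ) * ∑ k : Fin (ℓ + 1), |b k| := by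
          rw [← Finset.sum_mul, mul_comm]
  -- real and imaginary parts at the net point
  have hre : (P y).re = GTP.Rf (ℓ + 1) N j b := by
    rw [hP]
    simp only [Complex.re_sum, Complex.re_ofReal_mul, Complex.exp_ofReal_mul_I_re]
    unfold GTP.Rf GTP.thf
    refine Finset.sum_congr rfl fun k _ => ?_
    rw [hy]
    ring
  have him : (P y).im = GTP.If (ℓ + 1) N j b := by
    rw [hP]
    simp only [Complex.im_sum, Complex.im_ofReal_mul, Complex.exp_ofReal_mul_I_im]
    unfold GTP.If GTP.thf
    refine Finset.sum_congr rfl fun k _ => ?_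
    rw [hy]
    ring
  have habs : (norm : ℂ → ℝ) (P y) ≤ |GTP.Rf (ℓ + 1) N j b| + |GTP.If (ℓ + 1) N j b| := by
    rw [← hre, ← him]
    exact Complex.norm_le_abs_re_add_abs_im _
  set Rj := GTP.Rf (ℓ + 1) N j b
  set Ij := GTP.If (ℓ + 1) N j b
  have hRb := GTP.abs_le_exp_bound lam aa Rj hlam
  have hIb := GTP.abs_le_exp_bound lam aa Ij hlam
  have hfour : Real.exp (lam * Rj) + Real.exp (-(lam * Rj))
      + Real.exp (lam * Ij) + Real.exp (-(lam * Ij)) ≤ GTP.Tf (ℓ + 1) N lam b := by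
    exact Finset.single_le_sum (f := fun j' : Fin N =>
      Real.exp (lam * GTP.Rf (ℓ + 1) N j' b) + Real.exp (-(lam * GTP.Rf (ℓ + 1) N j' b))
      + Real.exp (lam * GTP.If (ℓ + 1) N j' b) + Real.exp (-(lam * GTP.If (ℓ + 1) N j' b)))
      (fun j' _ => by positivity) (Finset.mem_univ j)
  have hc0 : 0 ≤ Real.exp (-(lam * aa)) / lam := by positivity
  set c0 := Real.exp (-(lam * aa)) / lam
  have hpairR : c0 * (Real.exp (lam * Rj) + Real.exp (-(lam * Rj)))
      ≤ c0 * GTP.Tf (ℓ + 1) N lam b := by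
    apply mul_le_mul_of_nonneg_left _ hc0
    have := Real.exp_pos (lam * Ij)
    have := Real.exp_pos (-(lam * Ij))
    linarith
  have hpairI : c0 * (Real.exp (lam * Ij) + Real.exp (-(lam * Ij)))
      ≤ c0 * GTP.Tf (ℓ + 1) N lam b := by
    apply mul_le_mul_of_nonneg_left _ hc0
    have := Real.exp_pos (lam * Rj)
    have := Real.exp_pos (-(lam * Rj))
    linarith
  have hsum : ∑ k : Fin (ℓ + 1), |b k|
      ≤ ∑ k : Fin (ℓ + 1), (Real.exp (b k) + Real.exp (-(b k))) :=
    Finset.sum_le_sum fun k _ => GTP.abs_le_exp_add (b k)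
  have hc1 : (0:ℝ) ≤ 2 * π * ℓ / (N : ℝ) := by positivity
  have hlip2 : 2 * π * ℓ / (N : ℝ) * ∑ k : Fin (ℓ + 1), |b k|
      ≤ 2 * π * ℓ / (N : ℝ) * ∑ k : Fin (ℓ + 1), (Real.exp (b k) + Real.exp (-(b k))) :=
    mul_le_mul_of_nonneg_left hsum hc1
  rw [GTP.gf]
  have e1 : c0 * (2 * GTP.Tf (ℓ + 1) N lam b)
      = c0 * GTP.Tf (ℓ + 1) N lam b + c0 * GTP.Tf (ℓ + 1) N lam b := by ring
  linarith [tri, hlip, habs, hRb, hIb, hpairR, hpairI, hlip2]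

lemma GTP.integrable_exp_smul_lin (n : ℕ) (s : ℝ) (c : Fin n → ℝ) :
    Integrable (fun b : Fin n → ℝ => Real.exp (s * ∑ k, c k * b k))
      (Measure.pi fun _ => gaussianReal 0 1) := by
  have h : (fun b : Fin n → ℝ => Real.exp (s * ∑ k, c k * b k))
      = fun b => Real.exp (∑ k, (s * c k) * b k) := by
    ext b
    rw [Finset.mul_sum]
    congr 1
    exact Finset.sum_congr rfl fun k _ => by ring
  rw [h]
  exact GTP.integrable_exp_lin n _

lemma GTP.integral_exp_smul_lin (n : ℕ) (s : ℝ) (c : Fin n → ℝ) :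
    (∫ b, Real.exp (s * ∑ k, c k * b k) ∂(Measure.pi fun _ : Fin n => gaussianReal 0 1))
      = Real.exp (s ^ 2 * (∑ k, c k ^ 2) / 2) := by
  have h : (fun b : Fin n → ℝ => Real.exp (s * ∑ k, c k * b k))
      = fun b => Real.exp (∑ k, (s * c k) * b k) := by
    ext b
    rw [Finset.mul_sum]
    congr 1
    exact Finset.sum_congr rfl fun k _ => by ring
  rw [h, GTP.integral_exp_lin]
  congr 2
  simp_rw [mul_pow]
  rw [← Finset.mul_sum]

lemma GTP.Rf_eq (n N : ℕ) (j : Fin N) (lam : ℝ) (b : Fin n → ℝ) :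
    lam * GTP.Rf n N j b = lam * ∑ k : Fin n, Real.cos (GTP.thf N j (k : ℕ)) * b k := rfl

lemma GTP.integrable_Tf (n N : ℕ) (lam : ℝ) :
    Integrable (GTP.Tf n N lam) (Measure.pi fun _ : Fin n => gaussianReal 0 1) := by
  unfold GTP.Tf
  apply integrable_finset_sum
  intro j _
  have h1 : Integrable (fun b : Fin n → ℝ => Real.exp (lam * GTP.Rf n N j b))
      (Measure.pi fun _ => gaussianReal 0 1) := by
    unfold GTP.Rf
    exact GTP.integrable_exp_smul_lin n lam _
  have h2 : Integrable (fun b : Fin n → ℝ => Real.exp (-(lam * GTP.Rf n N j b)))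
      (Measure.pi fun _ => gaussianReal 0 1) := by
    have h : (fun b : Fin n → ℝ => Real.exp (-(lam * GTP.Rf n N j b)))
        = fun b => Real.exp ((-lam) * GTP.Rf n N j b) := by
      ext b; congr 1; ring
    rw [h]
    unfold GTP.Rf
    exact GTP.integrable_exp_smul_lin n (-lam) _
  have h3 : Integrable (fun b : Fin n → ℝ => Real.exp (lam * GTP.If n N j b))
      (Measure.pi fun _ => gaussianReal 0 1) := by
    unfold GTP.If
    exact GTP.integrable_exp_smul_lin n lam _
  have h4 : Integrable (fun b : Fin n → ℝ => Real.exp (-(lam * GTP.If n N j b)))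
      (Measure.pi fun _ => gaussianReal 0 1) := by
    have h : (fun b : Fin n → ℝ => Real.exp (-(lam * GTP.If n N j b)))
        = fun b => Real.exp ((-lam) * GTP.If n N j b) := by
      ext b; congr 1; ring
    rw [h]
    unfold GTP.If
    exact GTP.integrable_exp_smul_lin n (-lam) _
  exact ((h1.add h2).add h3).add h4

lemma GTP.exp_coord_eq (n : ℕ) (k : Fin n) (s : ℝ) :
    (fun b : Fin n → ℝ => Real.exp (s * b k))
      = fun b => Real.exp (s * ∑ i : Fin n, (if i = k then (1:ℝ) else 0) * b i) := by
  ext b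
  congr 2
  rw [Finset.sum_congr rfl (fun i _ => ite_mul (i = k) (1:ℝ) 0 (b i))]
  simp

lemma GTP.integrable_Sf (n : ℕ) :
    Integrable (fun b : Fin n → ℝ => ∑ k, (Real.exp (b k) + Real.exp (-(b k))))
      (Measure.pi fun _ : Fin n => gaussianReal 0 1) := by
  apply integrable_finset_sum
  intro k _
  have h1 : Integrable (fun b : Fin n → ℝ => Real.exp (b k))
      (Measure.pi fun _ => gaussianReal 0 1) := by
    have h : (fun b : Fin n → ℝ => Real.exp (b k))
        = fun b : Fin n → ℝ => Real.exp ((1:ℝ) * b k) := by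
      ext b; rw [one_mul]
    rw [h, GTP.exp_coord_eq]
    exact GTP.integrable_exp_smul_lin n 1 _
  have h2 : Integrable (fun b : Fin n → ℝ => Real.exp (-(b k)))
      (Measure.pi fun _ => gaussianReal 0 1) := by
    have h : (fun b : Fin n → ℝ => Real.exp (-(b k)))
        = fun b : Fin n → ℝ => Real.exp ((-1:ℝ) * b k) := by
      ext b; rw [neg_one_mul]
    rw [h, GTP.exp_coord_eq]
    exact GTP.integrable_exp_smul_lin n (-1) _
  exact h1.add h2

lemma GTP.integral_Sf (n : ℕ) :
    (∫ b, (∑ k, (Real.exp (b k) + Real.exp (-(b k))))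
        ∂(Measure.pi fun _ : Fin n => gaussianReal 0 1))
      = (n : ℝ) * (2 * Real.exp (1/2)) := by
  rw [integral_finset_sum]
  swap
  · intro k _
    have h1 : Integrable (fun b : Fin n → ℝ => Real.exp (b k))
        (Measure.pi fun _ => gaussianReal 0 1) := by
      have h : (fun b : Fin n → ℝ => Real.exp (b k))
          = fun b : Fin n → ℝ => Real.exp ((1:ℝ) * b k) := by
        ext b; rw [one_mul]
      rw [h, GTP.exp_coord_eq]
      exact GTP.integrable_exp_smul_lin n 1 _
    have h2 : Integrable (fun b : Fin n → ℝ => Real.exp (-(b k)))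
        (Measure.pi fun _ => gaussianReal 0 1) := by
      have h : (fun b : Fin n → ℝ => Real.exp (-(b k)))
          = fun b : Fin n → ℝ => Real.exp ((-1:ℝ) * b k) := by
        ext b; rw [neg_one_mul]
      rw [h, GTP.exp_coord_eq]
      exact GTP.integrable_exp_smul_lin n (-1) _
    exact h1.add h2
  have hval : ∀ k : Fin n, (∫ b, (Real.exp (b k) + Real.exp (-(b k)))
      ∂(Measure.pi fun _ : Fin n => gaussianReal 0 1)) = 2 * Real.exp (1/2) := by
    intro k
    have hsq : (∑ i : Fin n, (if i = k then (1:ℝ) else 0) ^ 2) = 1 := by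
      have hterm : ∀ i : Fin n, ((if i = k then (1:ℝ) else 0) ^ 2) = if i = k then (1:ℝ) else 0 := by
        intro i; split_ifs <;> simp
      rw [Finset.sum_congr rfl fun i _ => hterm i]
      simp
    have h1 : (fun b : Fin n → ℝ => Real.exp (b k))
        = fun b : Fin n → ℝ => Real.exp ((1:ℝ) * b k) := by
      ext b; rw [one_mul]
    have h2 : (fun b : Fin n → ℝ => Real.exp (-(b k)))
        = fun b : Fin n → ℝ => Real.exp ((-1:ℝ) * b k) := by
      ext b; rw [neg_one_mul]
    rw [integral_add]
    · have e1 : (∫ b, Real.exp (b k) ∂(Measure.pi fun _ : Fin n => gaussianReal 0 1))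
          = Real.exp (1/2) := by
        rw [show (fun b : Fin n → ℝ => Real.exp (b k)) = _ from h1, GTP.exp_coord_eq,
          GTP.integral_exp_smul_lin, hsq]
        norm_num
      have e2 : (∫ b, Real.exp (-(b k)) ∂(Measure.pi fun _ : Fin n => gaussianReal 0 1))
          = Real.exp (1/2) := by
        rw [show (fun b : Fin n → ℝ => Real.exp (-(b k))) = _ from h2, GTP.exp_coord_eq,
          GTP.integral_exp_smul_lin, hsq]
        norm_num
      rw [e1, e2]; ring
    · rw [h1, GTP.exp_coord_eq]; exact GTP.integrable_exp_smul_lin n 1 _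
    · rw [h2, GTP.exp_coord_eq]; exact GTP.integrable_exp_smul_lin n (-1) _
  rw [Finset.sum_congr rfl (fun k _ => hval k)]
  simp [Finset.card_univ, mul_comm]

lemma GTP.integral_exp_coef_le (n : ℕ) (s : ℝ) (c : Fin n → ℝ) (hc : ∀ k, c k ^ 2 ≤ 1) :
    (∫ b, Real.exp (s * ∑ k, c k * b k) ∂(Measure.pi fun _ : Fin n => gaussianReal 0 1))
      ≤ Real.exp (s ^ 2 * (n : ℝ) / 2) := by
  rw [GTP.integral_exp_smul_lin]
  apply Real.exp_le_exp.mpr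
  have hS : (∑ k, c k ^ 2) ≤ (n : ℝ) := by
    calc (∑ k, c k ^ 2) ≤ ∑ _k : Fin n, (1:ℝ) := Finset.sum_le_sum fun k _ => hc k
      _ = n := by simp
  have hs := sq_nonneg s
  have := mul_le_mul_of_nonneg_left hS hs
  linarith

lemma GTP.integrable_four (n N : ℕ) (lam : ℝ) (j : Fin N) :
    Integrable (fun b : Fin n → ℝ =>
        Real.exp (lam * GTP.Rf n N j b) + Real.exp (-(lam * GTP.Rf n N j b))
        + Real.exp (lam * GTP.If n N j b) + Real.exp (-(lam * GTP.If n N j b)))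
      (Measure.pi fun _ : Fin n => gaussianReal 0 1) := by
  have h1 : Integrable (fun b : Fin n → ℝ => Real.exp (lam * GTP.Rf n N j b))
      (Measure.pi fun _ => gaussianReal 0 1) := by
    unfold GTP.Rf
    exact GTP.integrable_exp_smul_lin n lam _
  have h2 : Integrable (fun b : Fin n → ℝ => Real.exp (-(lam * GTP.Rf n N j b)))
      (Measure.pi fun _ => gaussianReal 0 1) := by
    have h : (fun b : Fin n → ℝ => Real.exp (-(lam * GTP.Rf n N j b)))
        = fun b => Real.exp ((-lam) * GTP.Rf n N j b) := by
      ext b; congr 1; ring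
    rw [h]
    unfold GTP.Rf
    exact GTP.integrable_exp_smul_lin n (-lam) _
  have h3 : Integrable (fun b : Fin n → ℝ => Real.exp (lam * GTP.If n N j b))
      (Measure.pi fun _ => gaussianReal 0 1) := by
    unfold GTP.If
    exact GTP.integrable_exp_smul_lin n lam _
  have h4 : Integrable (fun b : Fin n → ℝ => Real.exp (-(lam * GTP.If n N j b)))
      (Measure.pi fun _ => gaussianReal 0 1) := by
    have h : (fun b : Fin n → ℝ => Real.exp (-(lam * GTP.If n N j b)))
        = fun b => Real.exp ((-lam) * GTP.If n N j b) := by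
      ext b; congr 1; ring
    rw [h]
    unfold GTP.If
    exact GTP.integrable_exp_smul_lin n (-lam) _
  exact ((h1.add h2).add h3).add h4

lemma GTP.integral_Tf_le (n N : ℕ) (lam : ℝ) :
    (∫ b, GTP.Tf n N lam b ∂(Measure.pi fun _ : Fin n => gaussianReal 0 1))
      ≤ (N : ℝ) * (4 * Real.exp (lam ^ 2 * (n : ℝ) / 2)) := by
  unfold GTP.Tf
  rw [integral_finset_sum _ (fun j _ => GTP.integrable_four n N lam j)]
  have hcos : ∀ (j : Fin N) (k : Fin n), Real.cos (GTP.thf N j (k : ℕ)) ^ 2 ≤ 1 :=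
    fun j k => Real.cos_sq_le_one _
  have hsin : ∀ (j : Fin N) (k : Fin n), Real.sin (GTP.thf N j (k : ℕ)) ^ 2 ≤ 1 :=
    fun j k => Real.sin_sq_le_one _
  have hj : ∀ j : Fin N,
      (∫ b, (Real.exp (lam * GTP.Rf n N j b) + Real.exp (-(lam * GTP.Rf n N j b))
        + Real.exp (lam * GTP.If n N j b) + Real.exp (-(lam * GTP.If n N j b)))
        ∂(Measure.pi fun _ : Fin n => gaussianReal 0 1))
      ≤ 4 * Real.exp (lam ^ 2 * (n : ℝ) / 2) := by
    intro j
    have h1 : Integrable (fun b : Fin n → ℝ => Real.exp (lam * GTP.Rf n N j b))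
        (Measure.pi fun _ => gaussianReal 0 1) := by
      unfold GTP.Rf; exact GTP.integrable_exp_smul_lin n lam _
    have h2 : Integrable (fun b : Fin n → ℝ => Real.exp (-(lam * GTP.Rf n N j b)))
        (Measure.pi fun _ => gaussianReal 0 1) := by
      have h : (fun b : Fin n → ℝ => Real.exp (-(lam * GTP.Rf n N j b)))
          = fun b => Real.exp ((-lam) * GTP.Rf n N j b) := by
        ext b; congr 1; ring
      rw [h]; unfold GTP.Rf; exact GTP.integrable_exp_smul_lin n (-lam) _
    have h3 : Integrable (fun b : Fin n → ℝ => Real.exp (lam * GTP.If n N j b))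
        (Measure.pi fun _ => gaussianReal 0 1) := by
      unfold GTP.If; exact GTP.integrable_exp_smul_lin n lam _
    have h4 : Integrable (fun b : Fin n → ℝ => Real.exp (-(lam * GTP.If n N j b)))
        (Measure.pi fun _ => gaussianReal 0 1) := by
      have h : (fun b : Fin n → ℝ => Real.exp (-(lam * GTP.If n N j b)))
          = fun b => Real.exp ((-lam) * GTP.If n N j b) := by
        ext b; congr 1; ring
      rw [h]; unfold GTP.If; exact GTP.integrable_exp_smul_lin n (-lam) _
    have h12 : Integrable (fun b : Fin n → ℝ =>
        Real.exp (lam * GTP.Rf n N j b) + Real.exp (-(lam * GTP.Rf n N j b)))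
        (Measure.pi fun _ => gaussianReal 0 1) := h1.add h2
    have h123 : Integrable (fun b : Fin n → ℝ =>
        Real.exp (lam * GTP.Rf n N j b) + Real.exp (-(lam * GTP.Rf n N j b))
        + Real.exp (lam * GTP.If n N j b))
        (Measure.pi fun _ => gaussianReal 0 1) := h12.add h3
    rw [integral_add h123 h4, integral_add h12 h3, integral_add h1 h2]
    have e1 : (∫ b, Real.exp (lam * GTP.Rf n N j b)
        ∂(Measure.pi fun _ : Fin n => gaussianReal 0 1))
        ≤ Real.exp (lam ^ 2 * (n : ℝ) / 2) := by
      unfold GTP.Rf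
      exact GTP.integral_exp_coef_le n lam _ (hcos j)
    have e2 : (∫ b, Real.exp (-(lam * GTP.Rf n N j b))
        ∂(Measure.pi fun _ : Fin n => gaussianReal 0 1))
        ≤ Real.exp (lam ^ 2 * (n : ℝ) / 2) := by
      have h : (fun b : Fin n → ℝ => Real.exp (-(lam * GTP.Rf n N j b)))
          = fun b => Real.exp ((-lam) * GTP.Rf n N j b) := by
        ext b; congr 1; ring
      rw [h]
      unfold GTP.Rf
      have := GTP.integral_exp_coef_le n (-lam) _ (hcos j)
      rwa [show ((-lam : ℝ)) ^ 2 = lam ^ 2 from by ring] at this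
    have e3 : (∫ b, Real.exp (lam * GTP.If n N j b)
        ∂(Measure.pi fun _ : Fin n => gaussianReal 0 1))
        ≤ Real.exp (lam ^ 2 * (n : ℝ) / 2) := by
      unfold GTP.If
      exact GTP.integral_exp_coef_le n lam _ (hsin j)
    have e4 : (∫ b, Real.exp (-(lam * GTP.If n N j b))
        ∂(Measure.pi fun _ : Fin n => gaussianReal 0 1))
        ≤ Real.exp (lam ^ 2 * (n : ℝ) / 2) := by
      have h : (fun b : Fin n → ℝ => Real.exp (-(lam * GTP.If n N j b)))
          = fun b => Real.exp ((-lam) * GTP.If n N j b) := by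
        ext b; congr 1; ring
      rw [h]
      unfold GTP.If
      have := GTP.integral_exp_coef_le n (-lam) _ (hsin j)
      rwa [show ((-lam : ℝ)) ^ 2 = lam ^ 2 from by ring] at this
    linarith
  calc (∑ j : Fin N, ∫ b, (Real.exp (lam * GTP.Rf n N j b) + Real.exp (-(lam * GTP.Rf n N j b))
        + Real.exp (lam * GTP.If n N j b) + Real.exp (-(lam * GTP.If n N j b)))
        ∂(Measure.pi fun _ : Fin n => gaussianReal 0 1))
      ≤ ∑ _j : Fin N, 4 * Real.exp (lam ^ 2 * (n : ℝ) / 2) :=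
        Finset.sum_le_sum fun j _ => hj j
    _ = (N : ℝ) * (4 * Real.exp (lam ^ 2 * (n : ℝ) / 2)) := by
        rw [Finset.sum_const, Finset.card_univ, Fintype.card_fin, nsmul_eq_mul]

lemma GTP.integrable_gf (ℓ N : ℕ) (lam aa : ℝ) :
    Integrable (GTP.gf ℓ N lam aa) (Measure.pi fun _ : Fin (ℓ + 1) => gaussianReal 0 1) := by
  unfold GTP.gf
  refine Integrable.add (Integrable.add (integrable_const _) ?_) ?_
  · exact ((GTP.integrable_Tf (ℓ + 1) N lam).const_mul 2).const_mul _
  · exact (GTP.integrable_Sf (ℓ + 1)).const_mul _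

lemma GTP.integral_gf_le (ℓ N : ℕ) (lam aa : ℝ) (hlam : 0 < lam) :
    (∫ b, GTP.gf ℓ N lam aa b ∂(Measure.pi fun _ : Fin (ℓ + 1) => gaussianReal 0 1))
      ≤ 2 * aa + Real.exp (-(lam * aa)) / lam
          * (2 * ((N : ℝ) * (4 * Real.exp (lam ^ 2 * ((ℓ : ℝ) + 1) / 2))))
        + 2 * π * ℓ / (N : ℝ) * (((ℓ : ℝ) + 1) * (2 * Real.exp (1/2))) := by
  unfold GTP.gf
  have hconst : Integrable (fun _ : Fin (ℓ + 1) → ℝ => 2 * aa)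
      (Measure.pi fun _ => gaussianReal 0 1) := integrable_const _
  have hTint : Integrable (fun b : Fin (ℓ + 1) → ℝ =>
      Real.exp (-(lam * aa)) / lam * (2 * GTP.Tf (ℓ + 1) N lam b))
      (Measure.pi fun _ => gaussianReal 0 1) :=
    ((GTP.integrable_Tf (ℓ + 1) N lam).const_mul 2).const_mul _
  have hA : Integrable (fun b : Fin (ℓ + 1) → ℝ =>
      2 * aa + Real.exp (-(lam * aa)) / lam * (2 * GTP.Tf (ℓ + 1) N lam b))
      (Measure.pi fun _ => gaussianReal 0 1) := hconst.add hTint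
  have hSint : Integrable (fun b : Fin (ℓ + 1) → ℝ =>
      2 * π * ℓ / (N : ℝ) * ∑ k, (Real.exp (b k) + Real.exp (-(b k))))
      (Measure.pi fun _ => gaussianReal 0 1) := (GTP.integrable_Sf (ℓ + 1)).const_mul _
  rw [integral_add hA hSint, integral_add hconst hTint,
    integral_const, integral_const_mul, integral_const_mul, integral_const_mul]
  simp only [probReal_univ, smul_eq_mul, one_mul]
  have hT := GTP.integral_Tf_le (ℓ + 1) N lam
  have hS := GTP.integral_Sf (ℓ + 1)
  have hc0 : (0:ℝ) ≤ Real.exp (-(lam * aa)) / lam := by positivity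
  have hc1 : (0:ℝ) ≤ 2 * π * ℓ / (N : ℝ) := by positivity
  have hcast : (((ℓ + 1 : ℕ)) : ℝ) = (ℓ : ℝ) + 1 := by push_cast; ring
  rw [hS, hcast]
  have h2T : 2 * (∫ b, GTP.Tf (ℓ + 1) N lam b
      ∂(Measure.pi fun _ : Fin (ℓ + 1) => gaussianReal 0 1))
      ≤ 2 * ((N : ℝ) * (4 * Real.exp (lam ^ 2 * ((ℓ : ℝ) + 1) / 2))) := by
    rw [hcast] at hT
    linarith
  have := mul_le_mul_of_nonneg_left h2T hc0
  linarith

set_option maxHeartbeats 1000000 in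
/-- Dudley-type bound for a random trigonometric polynomial with i.i.d. standard Gaussian
coefficients: there is a universal `C > 0` such that for every `ℓ ≥ 2`,
`E[sup_{x ∈ [0,1]} |∑_{k=0}^ℓ b_k e^{2πikx}|] ≤ C (ℓ log ℓ)^{1/2}`. -/
theorem gaussian_trig_poly_sup_expectation :
    ∃ C : ℝ, 0 < C ∧ ∀ ℓ : ℕ, 2 ≤ ℓ →
      (∫ b, (⨆ x : Set.Icc (0 : ℝ) 1,
            (norm : ℂ → ℝ) (∑ k : Fin (ℓ + 1),
              (b k : ℂ) * Complex.exp (2 * Real.pi * Complex.I * (k : ℕ) * (x : ℝ))))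
          ∂(Measure.pi fun _ : Fin (ℓ + 1) => gaussianReal 0 1))
        ≤ C * Real.sqrt ((ℓ : ℝ) * Real.log ℓ) := by
  refine ⟨100, by norm_num, ?_⟩
  intro ℓ hℓ
  set N : ℕ := ℓ ^ 2 with hNdef
  have hℓr : (2:ℝ) ≤ (ℓ:ℝ) := by exact_mod_cast hℓ
  have hℓpos : (0:ℝ) < (ℓ:ℝ) := by linarith
  have hN : 0 < N := by positivity
  have hNr : (0:ℝ) < (N:ℝ) := by exact_mod_cast hN
  have hNcast : ((N:ℕ):ℝ) = (ℓ:ℝ) ^ 2 := by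
    rw [hNdef]; push_cast; ring
  have hlog2 : (0.6931:ℝ) < Real.log 2 := by
    have := Real.log_two_gt_d9
    linarith
  have hlogℓ : Real.log 2 ≤ Real.log ℓ := Real.log_le_log (by norm_num) hℓr
  have hlogℓpos : 0 < Real.log ℓ := by linarith
  set X : ℝ := 2 * Real.log (4 * (N:ℝ)) with hXdef
  have hlog4N : Real.log 4 ≤ Real.log (4 * (N:ℝ)) :=
    Real.log_le_log (by norm_num) (by nlinarith)
  have hlog4 : Real.log 4 = 2 * Real.log 2 := by
    rw [show (4:ℝ) = 2 ^ 2 by norm_num, Real.log_pow]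
    push_cast; ring
  have hXpos : 0 < X := by
    rw [hXdef]; linarith
  set m : ℝ := (ℓ:ℝ) + 1 with hmdef
  have hmpos : 0 < m := by rw [hmdef]; linarith
  set lam : ℝ := Real.sqrt X / Real.sqrt m with hlamdef
  have hlam : 0 < lam :=
    div_pos (Real.sqrt_pos.mpr hXpos) (Real.sqrt_pos.mpr hmpos)
  set aa : ℝ := lam * m with haadef
  have hlam2 : lam ^ 2 * m = X := by
    rw [hlamdef, div_pow, Real.sq_sqrt hXpos.le, Real.sq_sqrt hmpos.le]
    exact div_mul_cancel₀ X (ne_of_gt hmpos)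
  have hlam2' : lam ^ 2 * ((ℓ:ℝ) + 1) = X := by rw [← hmdef]; exact hlam2
  have hlamaa : lam * aa = X := by
    rw [haadef, ← mul_assoc, ← sq]
    exact hlam2
  have hpt : ∀ b : Fin (ℓ + 1) → ℝ,
      (⨆ x : Set.Icc (0 : ℝ) 1,
        (norm : ℂ → ℝ) (∑ k : Fin (ℓ + 1),
          (b k : ℂ) * Complex.exp (2 * Real.pi * Complex.I * (k : ℕ) * (x : ℝ))))
      ≤ GTP.gf ℓ N lam aa b := by
    intro b
    haveI : Nonempty (Set.Icc (0:ℝ) 1) := ⟨⟨0, by norm_num⟩⟩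
    refine ciSup_le fun x => ?_
    exact GTP.pointwise ℓ N hN lam aa hlam b (x : ℝ) x.2.1 x.2.2
  have hnonneg : ∀ b : Fin (ℓ + 1) → ℝ,
      0 ≤ (⨆ x : Set.Icc (0 : ℝ) 1,
        (norm : ℂ → ℝ) (∑ k : Fin (ℓ + 1),
          (b k : ℂ) * Complex.exp (2 * Real.pi * Complex.I * (k : ℕ) * (x : ℝ)))) :=
    fun b => Real.iSup_nonneg fun x => norm_nonneg _
  have hint := GTP.integrable_gf ℓ N lam aa
  have hmono := integral_mono_of_nonneg (ae_of_all _ hnonneg) hint (ae_of_all _ hpt)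
  refine hmono.trans ?_
  refine (GTP.integral_gf_le ℓ N lam aa hlam).trans ?_
  -- middle term simplification
  have hE1 : X / 2 = Real.log (4 * (N:ℝ)) := by rw [hXdef]; ring
  have hexpX2 : Real.exp (X / 2) = 4 * (N:ℝ) := by
    rw [hE1, Real.exp_log (by positivity)]
  have hexpX : Real.exp X = (4 * (N:ℝ)) * (4 * (N:ℝ)) := by
    rw [show X = X/2 + X/2 by ring, Real.exp_add, hexpX2]
  have hexpnX : Real.exp (-(lam * aa)) = ((4 * (N:ℝ)) * (4 * (N:ℝ)))⁻¹ := by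
    rw [hlamaa, Real.exp_neg, hexpX]
  have hM : Real.exp (-(lam * aa)) / lam
      * (2 * ((N:ℝ) * (4 * Real.exp (lam ^ 2 * ((ℓ:ℝ) + 1) / 2)))) = 2 / lam := by
    rw [hlam2', hexpX2, hexpnX]
    field_simp
  rw [hM]
  set s : ℝ := Real.sqrt ((ℓ:ℝ) * Real.log ℓ) with hsdef
  have hs0 : 0 ≤ s := Real.sqrt_nonneg _
  have hs1 : 1 ≤ s := by
    rw [hsdef, show (1:ℝ) = Real.sqrt 1 from Real.sqrt_one.symm]
    apply Real.sqrt_le_sqrt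
    have h2l : (2:ℝ) * Real.log 2 ≤ (ℓ:ℝ) * Real.log ℓ :=
      mul_le_mul hℓr hlogℓ (by linarith) (by linarith)
    linarith
  -- bound on aa
  have haaval : aa = Real.sqrt X * Real.sqrt m := by
    rw [haadef, hlamdef, div_mul_eq_mul_div, mul_div_assoc, Real.div_sqrt]
  have hXle : X ≤ 8 * Real.log ℓ := by
    rw [hXdef, hNcast, Real.log_mul (by norm_num) (by positivity), Real.log_pow]
    push_cast
    linarith
  have hmle : m ≤ 2 * (ℓ:ℝ) := by rw [hmdef]; linarith
  have h16 : Real.sqrt (16 * ((ℓ:ℝ) * Real.log ℓ)) = 4 * s := by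
    rw [show (16:ℝ) * ((ℓ:ℝ) * Real.log ℓ) = 4 ^ 2 * ((ℓ:ℝ) * Real.log ℓ) by ring,
      Real.sqrt_mul (by positivity), Real.sqrt_sq (by norm_num), hsdef]
  have haable : aa ≤ 4 * s := by
    rw [haaval]
    calc Real.sqrt X * Real.sqrt m
        ≤ Real.sqrt (8 * Real.log ℓ) * Real.sqrt (2 * (ℓ:ℝ)) := by
          apply mul_le_mul (Real.sqrt_le_sqrt hXle) (Real.sqrt_le_sqrt hmle)
            (Real.sqrt_nonneg _) (Real.sqrt_nonneg _)
      _ = Real.sqrt ((8 * Real.log ℓ) * (2 * (ℓ:ℝ))) :=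
          (Real.sqrt_mul (by positivity) _).symm
      _ = Real.sqrt (16 * ((ℓ:ℝ) * Real.log ℓ)) := by ring_nf
      _ = 4 * s := h16
  -- bound on 2/lam
  have hX1 : 1 ≤ Real.sqrt X := by
    rw [show (1:ℝ) = Real.sqrt 1 from Real.sqrt_one.symm]
    apply Real.sqrt_le_sqrt
    rw [hXdef]
    linarith
  have h4s : Real.sqrt (4 * ((ℓ:ℝ) * Real.log ℓ)) = 2 * s := by
    rw [show (4:ℝ) * ((ℓ:ℝ) * Real.log ℓ) = 2 ^ 2 * ((ℓ:ℝ) * Real.log ℓ) by ring,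
      Real.sqrt_mul (by positivity), Real.sqrt_sq (by norm_num), hsdef]
  have hlamb : 2 / lam ≤ 4 * s := by
    have h1 : 2 / lam = 2 * Real.sqrt m / Real.sqrt X := by
      rw [hlamdef]
      field_simp
    have h2 : 2 * Real.sqrt m / Real.sqrt X ≤ 2 * Real.sqrt m :=
      div_le_self (by positivity) hX1
    have h3 : Real.sqrt m ≤ Real.sqrt (4 * ((ℓ:ℝ) * Real.log ℓ)) := by
      apply Real.sqrt_le_sqrt
      rw [hmdef]
      have hhalf : (1/2:ℝ) ≤ Real.log ℓ := by linarith
      have := mul_le_mul_of_nonneg_left hhalf (by positivity : (0:ℝ) ≤ 4 * (ℓ:ℝ))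
      nlinarith
    rw [h1]
    rw [h4s] at h3
    linarith
  -- bound on the Lipschitz term
  have hexpE : Real.exp (1/2 : ℝ) ≤ 3 := by
    have h1 : Real.exp (1/2 : ℝ) ≤ Real.exp 1 := Real.exp_le_exp.mpr (by norm_num)
    have := Real.exp_one_lt_d9
    linarith
  have hc3 : 2 * π * (ℓ:ℝ) / (N:ℝ) * (((ℓ:ℝ) + 1) * (2 * Real.exp (1/2))) ≤ 72 := by
    rw [hNcast]
    have hπ := Real.pi_le_four
    have hπ0 := Real.pi_pos
    have hE0 := Real.exp_pos (1/2 : ℝ)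
    have heq : 2 * π * (ℓ:ℝ) / ((ℓ:ℝ) ^ 2) * (((ℓ:ℝ) + 1) * (2 * Real.exp (1/2)))
        = 4 * π * Real.exp (1/2) * (((ℓ:ℝ) + 1) / (ℓ:ℝ)) := by
      field_simp
      ring
    rw [heq]
    have hdiv : ((ℓ:ℝ) + 1) / (ℓ:ℝ) ≤ 3/2 := by
      rw [div_le_iff₀ hℓpos]; linarith
    have hdiv0 : 0 ≤ ((ℓ:ℝ) + 1) / (ℓ:ℝ) := by positivity
    have hPE : π * Real.exp (1/2) ≤ 12 := by nlinarith
    have hstep : 4 * π * Real.exp (1/2) * (((ℓ:ℝ) + 1) / (ℓ:ℝ))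
        ≤ 4 * π * Real.exp (1/2) * (3/2) := by
      apply mul_le_mul_of_nonneg_left hdiv
      positivity
    linarith
  linarith [haable, hlamb, hc3, hs1, hs0]
end

section
/- Let s > 1/2, M > 0, ν > 0, Q₂ > 0. Let a : ℕ → ℝ satisfy Σ_{k≥0} (k + 1/2)^{2s} a_k² ≤ M², and let γ : ℕ → ℝ satisfy Σ_{k=0}^{ℓ} γ_k² ≤ Q₂ (max(ℓ,1))^{2ν−1} for all ℓ ∈ ℕ. Then there exists a constant C depending only on s, M, Q₂ such that for all ℓ ∈ ℕ: Σ_{i=0}^{ℓ} ( Σ_{j=0}^{i} a_{i−j} γ_j )² ≤ C (max(ℓ,1))^{2ν−1}; that is, ‖T_ℓ(a) γ^ℓ‖² ≤ C (max(ℓ,1))^{2ν−1} where γ^ℓ = (γ_0, …, γ_ℓ). -/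
open Finset

lemma wsum_aux (s : ℝ) (hs : 1/2 < s) :
    Summable (fun k : ℕ => ((k : ℝ) + 1/2) ^ (-(2*s))) := by
  have h1 : Summable (fun n : ℕ => (n : ℝ) ^ (-(2*s))) :=
    Real.summable_nat_rpow.2 (by linarith)
  have h2 : Summable (fun n : ℕ => ((n : ℝ) + 1) ^ (-(2*s))) := by
    have := (summable_nat_add_iff 1).2 h1
    simpa [Nat.cast_add] using this
  apply Summable.of_nonneg_of_le (fun k => by positivity)
    (fun k => ?_) (h2.mul_left ((2:ℝ) ^ (2*s)))
  have hb : ((k:ℝ) + 1) / 2 ≤ (k:ℝ) + 1/2 := by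
    have : (0:ℝ) ≤ (k:ℝ) := Nat.cast_nonneg k
    linarith
  have h0 : (0:ℝ) < ((k:ℝ) + 1) / 2 := by positivity
  calc ((k:ℝ) + 1/2) ^ (-(2*s)) ≤ (((k:ℝ) + 1)/2) ^ (-(2*s)) :=
        Real.rpow_le_rpow_of_nonpos h0 hb (by linarith)
    _ = (2:ℝ) ^ (2*s) * ((k:ℝ) + 1) ^ (-(2*s)) := by
        rw [Real.div_rpow (by positivity) (by norm_num),
          Real.rpow_neg (by norm_num : (0:ℝ) ≤ 2)]
        field_simp

lemma triangle_swap (G : ℕ → ℕ → ℝ) (n : ℕ) :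
    ∑ i ∈ range n, ∑ j ∈ range (i+1), G i j
      = ∑ j ∈ range n, ∑ i ∈ Finset.Ico j n, G i j := by
  have := Finset.sum_Ico_Ico_comm 0 n (fun j i => G i j)
  simp only [Nat.Ico_zero_eq_range] at this
  exact this.symm

/-- If `a` lies in a Laguerre–Sobolev ball of smoothness `s > 1/2` and radius `M`, and `γ`
satisfies the degree-`ν` bound `∑_{k≤ℓ} γ_k² ≤ Q₂ (max(ℓ,1))^{2ν−1}`, then there is a
constant `C` depending only on `s, M, Q₂` with
`∑_{i≤ℓ} (∑_{j≤i} a_{i−j} γ_j)² ≤ C (max(ℓ,1))^{2ν−1}` for all `ℓ`,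
i.e. `‖T_ℓ(a) γ^ℓ‖² ≤ C (max(ℓ,1))^{2ν−1}`. -/
theorem toeplitz_apply_sobolev_bound (s M Q₂ : ℝ) (hs : 1 / 2 < s) (hM : 0 < M)
    (hQ₂ : 0 < Q₂) :
    ∃ C : ℝ, 0 < C ∧ ∀ (ν : ℝ), 0 < ν → ∀ (a γ : ℕ → ℝ),
      Summable (fun k : ℕ => ((k : ℝ) + 1 / 2) ^ (2 * s) * (a k) ^ 2) →
      (∑' k : ℕ, ((k : ℝ) + 1 / 2) ^ (2 * s) * (a k) ^ 2) ≤ M ^ 2 →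
      (∀ ℓ : ℕ, ∑ k ∈ Finset.range (ℓ + 1), (γ k) ^ 2
          ≤ Q₂ * ((max ℓ 1 : ℕ) : ℝ) ^ (2 * ν - 1)) →
      ∀ ℓ : ℕ,
        ∑ i ∈ Finset.range (ℓ + 1), (∑ j ∈ Finset.range (i + 1), a (i - j) * γ j) ^ 2
          ≤ C * ((max ℓ 1 : ℕ) : ℝ) ^ (2 * ν - 1) := by
  set S : ℝ := ∑' k : ℕ, ((k : ℝ) + 1/2) ^ (-(2*s)) with hS
  have hSsum := wsum_aux s hs
  have hSpos : 0 < S :=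
    Summable.tsum_pos hSsum (fun k => by positivity) 0 (by positivity)
  refine ⟨S * M^2 * Q₂, by positivity, ?_⟩
  intro ν hν a γ hsa hsum hγ ℓ
  set A : ℝ := ∑ k ∈ range (ℓ+1), |a k| with hA
  have hA0 : 0 ≤ A := Finset.sum_nonneg fun k _ => abs_nonneg _
  -- Step 1: A^2 ≤ S * M^2
  have hA2 : A ^ 2 ≤ S * M ^ 2 := by
    have hcs := Finset.sum_mul_sq_le_sq_mul_sq (range (ℓ+1))
      (fun k => ((k:ℝ) + 1/2) ^ (-s)) (fun k => ((k:ℝ) + 1/2) ^ s * |a k|)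
    have heq : ∀ k ∈ range (ℓ+1),
        ((k:ℝ) + 1/2) ^ (-s) * (((k:ℝ) + 1/2) ^ s * |a k|) = |a k| := by
      intro k _
      rw [← mul_assoc, ← Real.rpow_add (by positivity), neg_add_cancel,
        Real.rpow_zero, one_mul]
    rw [Finset.sum_congr rfl heq] at hcs
    refine hcs.trans (mul_le_mul ?_ ?_ ?_ hSpos.le)
    · have h1 : ∀ k ∈ range (ℓ+1),
          (((k:ℝ) + 1/2) ^ (-s)) ^ 2 = ((k:ℝ) + 1/2) ^ (-(2*s)) := by
        intro k _
        rw [← Real.rpow_natCast (((k:ℝ) + 1/2) ^ (-s)) 2,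
          ← Real.rpow_mul (by positivity)]
        congr 1
        push_cast
        ring
      rw [Finset.sum_congr rfl h1]
      exact Summable.sum_le_tsum _ (fun k _ => by positivity) hSsum
    · have h2 : ∀ k ∈ range (ℓ+1),
          (((k:ℝ) + 1/2) ^ s * |a k|) ^ 2 = ((k:ℝ) + 1/2) ^ (2*s) * (a k)^2 := by
        intro k _
        rw [mul_pow, sq_abs, ← Real.rpow_natCast (((k:ℝ) + 1/2) ^ s) 2,
          ← Real.rpow_mul (by positivity)]
        congr 1
        push_cast
        ring
      rw [Finset.sum_congr rfl h2]
      exact le_trans (Summable.sum_le_tsum _ (fun k _ => by positivity) hsa) hsum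
    · exact Finset.sum_nonneg fun k _ => by positivity
  -- Step 2: Young's inequality (finite)
  have hYoung : ∑ i ∈ range (ℓ+1), (∑ j ∈ range (i+1), a (i-j) * γ j) ^ 2
      ≤ A^2 * ∑ j ∈ range (ℓ+1), (γ j)^2 := by
    have hrow : ∀ i ∈ range (ℓ+1), (∑ j ∈ range (i+1), a (i-j) * γ j) ^ 2
        ≤ A * ∑ j ∈ range (i+1), |a (i-j)| * (γ j)^2 := by
      intro i hi
      have h1 : (∑ j ∈ range (i+1), a (i-j) * γ j) ^ 2
          ≤ (∑ j ∈ range (i+1), |a (i-j)| * |γ j|) ^ 2 := by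
        rw [← sq_abs (∑ j ∈ range (i+1), a (i-j) * γ j)]
        apply pow_le_pow_left₀ (abs_nonneg _)
        refine (Finset.abs_sum_le_sum_abs _ _).trans_eq ?_
        exact Finset.sum_congr rfl fun j _ => abs_mul _ _
      have hcs := Finset.sum_mul_sq_le_sq_mul_sq (range (i+1))
        (fun j => Real.sqrt |a (i-j)|) (fun j => Real.sqrt |a (i-j)| * |γ j|)
      have he1 : ∀ j ∈ range (i+1),
          Real.sqrt |a (i-j)| * (Real.sqrt |a (i-j)| * |γ j|) = |a (i-j)| * |γ j| := by
        intro j _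
        rw [← mul_assoc, Real.mul_self_sqrt (abs_nonneg _)]
      have he2 : ∀ j ∈ range (i+1), (Real.sqrt |a (i-j)|) ^ 2 = |a (i-j)| :=
        fun j _ => Real.sq_sqrt (abs_nonneg _)
      have he3 : ∀ j ∈ range (i+1),
          (Real.sqrt |a (i-j)| * |γ j|) ^ 2 = |a (i-j)| * (γ j)^2 := by
        intro j _
        rw [mul_pow, Real.sq_sqrt (abs_nonneg _), sq_abs]
      rw [Finset.sum_congr rfl he1, Finset.sum_congr rfl he2,
        Finset.sum_congr rfl he3] at hcs
      refine h1.trans (hcs.trans ?_)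
      apply mul_le_mul_of_nonneg_right _ (Finset.sum_nonneg fun j _ => by positivity)
      -- ∑_{j ≤ i} |a (i-j)| ≤ A
      have hrefl : ∑ j ∈ range (i+1), |a (i-j)| = ∑ j ∈ range (i+1), |a j| := by
        have h := Finset.sum_range_reflect (fun k => |a k|) (i+1)
        simpa using h
      rw [hrefl]
      apply Finset.sum_le_sum_of_subset_of_nonneg
      · exact Finset.range_subset_range.2 (by rw [mem_range] at hi; omega)
      · exact fun k _ _ => abs_nonneg _
    calc ∑ i ∈ range (ℓ+1), (∑ j ∈ range (i+1), a (i-j) * γ j) ^ 2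
        ≤ ∑ i ∈ range (ℓ+1), A * ∑ j ∈ range (i+1), |a (i-j)| * (γ j)^2 :=
          Finset.sum_le_sum hrow
      _ = A * ∑ i ∈ range (ℓ+1), ∑ j ∈ range (i+1), |a (i-j)| * (γ j)^2 := by
          rw [Finset.mul_sum]
      _ = A * ∑ j ∈ range (ℓ+1), ∑ i ∈ Finset.Ico j (ℓ+1), |a (i-j)| * (γ j)^2 := by
          rw [triangle_swap]
      _ ≤ A * ∑ j ∈ range (ℓ+1), A * (γ j)^2 := by
          apply mul_le_mul_of_nonneg_left _ hA0
          apply Finset.sum_le_sum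
          intro j hj
          rw [mem_range] at hj
          rw [← Finset.sum_mul]
          apply mul_le_mul_of_nonneg_right _ (sq_nonneg _)
          rw [Finset.sum_Ico_eq_sum_range]
          have hsh : ∀ k ∈ range (ℓ+1-j), |a (j + k - j)| = |a k| := by
            intro k _
            rw [Nat.add_sub_cancel_left]
          rw [Finset.sum_congr rfl hsh]
          apply Finset.sum_le_sum_of_subset_of_nonneg
          · exact Finset.range_subset_range.2 (by omega)
          · exact fun k _ _ => abs_nonneg _
      _ = A^2 * ∑ j ∈ range (ℓ+1), (γ j)^2 := by
          rw [← Finset.mul_sum]; ring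
  calc ∑ i ∈ range (ℓ+1), (∑ j ∈ range (i+1), a (i-j) * γ j) ^ 2
      ≤ A^2 * ∑ j ∈ range (ℓ+1), (γ j)^2 := hYoung
    _ ≤ (S * M^2) * (Q₂ * ((max ℓ 1 : ℕ) : ℝ) ^ (2 * ν - 1)) := by
        apply mul_le_mul hA2 (hγ ℓ) (Finset.sum_nonneg fun j _ => sq_nonneg _)
          (by positivity)
    _ = S * M^2 * Q₂ * ((max ℓ 1 : ℕ) : ℝ) ^ (2 * ν - 1) := by ring
end
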